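/- arXiv:0711.3009 — 3 statements merged into one kernel-verified Lean document; each statement's English description precedes it below -/
import Mathlib

section
/- Fix an integer k ≥ 1. For every ε > 0 there exists an integer M ≥ 1 such that for all integers m_1, …, m_{k+1} ≥ M, one has 1 < λ(P_{(m_1,…,m_{k+1})}) < 1 + ε. In other words, λ(P_{(m_1,…,m_{k+1})}) → 1 as m_1, …, m_{k+1} all tend to ∞. -/
open Polynomial

/-- The polynomials `R_{(m_1, …, m_i)}` of Kin–Takasawa (the sequence `m` is indexed
starting from `1`; the value at `0` is a dummy): `R_{(m_1)}(t) = t^{m_1+1}(t-1) - 2t`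
and `R_{(m_1,…,m_i)}(t) = t^{m_i}(t-1) R_{(m_1,…,m_{i-1})}(t)
+ (-1)^i 2t (R_{(m_1,…,m_{i-1})})_*(t)` for `i ≥ 2`, where `f_*` is the reciprocal
polynomial `t^(deg f) f(1/t)`, i.e. `Polynomial.reverse`. -/
noncomputable def Rpoly (m : ℕ → ℕ) : ℕ → Polynomial ℤ
  | 0 => 1
  | 1 => X ^ (m 1 + 1) * (X - 1) - 2 * X
  | (i + 2) => X ^ (m (i + 2)) * (X - 1) * Rpoly m (i + 1)
      + (-1 : Polynomial ℤ) ^ (i + 2) * (2 * X) * (Rpoly m (i + 1)).reverse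

/-- The polynomial `P_{(m_1, …, m_{k+1})}(t) = t^{m_{k+1}} R_{(m_1,…,m_k)}(t)
+ (-1)^{k+1} (R_{(m_1,…,m_k)})_*(t)`, whose largest root is the dilatation of the
pseudo-Anosov braid `β_{(m_1,…,m_{k+1})}`. -/
noncomputable def Ppoly (m : ℕ → ℕ) (k : ℕ) : Polynomial ℤ :=
  X ^ (m (k + 1)) * Rpoly m k + (-1 : Polynomial ℤ) ^ (k + 1) * (Rpoly m k).reverse

/-- For an integer polynomial `f`, the maximal absolute value of its complex roots. -/
noncomputable def maxRootAbs (f : Polynomial ℤ) : ℝ :=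
  sSup ((fun z : ℂ => ‖z‖) '' {z : ℂ | Polynomial.aeval z f = 0})

noncomputable def Complex.abs : AbsoluteValue ℂ ℝ where
  toFun z := ‖z‖
  map_mul' := norm_mul
  nonneg' := norm_nonneg
  eq_zero' _ := norm_eq_zero
  add_le' := norm_add_le

lemma Complex.abs_apply (z : ℂ) : Complex.abs z = ‖z‖ := rfl

@[simp] lemma Complex.abs_two : Complex.abs (2 : ℂ) = 2 := by
  simp [Complex.abs_apply]

lemma Complex.abs_ofReal (r : ℝ) : Complex.abs (r : ℂ) = |r| := by
  simp [Complex.abs_apply, Complex.norm_real]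

open Set

/-- degree of `Rpoly m i` (for `i ≥ 1`). -/
def Dd (m : ℕ → ℕ) (i : ℕ) : ℕ := (∑ j ∈ Finset.Icc 1 i, m j) + i + 1

lemma Dd_one (m : ℕ → ℕ) : Dd m 1 = m 1 + 2 := by
  simp [Dd]

lemma Dd_succ (m : ℕ → ℕ) (i : ℕ) : Dd m (i+1) = m (i+1) + 1 + Dd m i := by
  unfold Dd
  rw [Finset.sum_Icc_succ_top (by omega : 1 ≤ i + 1)]
  ring

-- evaluation of the recursion
lemma aeval_Rpoly_one {K : Type*} [CommRing K] (m : ℕ → ℕ) (z : K) :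
    aeval z (Rpoly m 1) = z ^ (m 1 + 1) * (z - 1) - 2 * z := by
  simp [Rpoly, map_ofNat]

lemma aeval_Rpoly_two {K : Type*} [CommRing K] (m : ℕ → ℕ) (j : ℕ) (z : K) :
    aeval z (Rpoly m (j+2)) = z ^ (m (j+2)) * (z - 1) * aeval z (Rpoly m (j+1))
      + (-1 : K) ^ (j+2) * (2 * z) * aeval z (Rpoly m (j+1)).reverse := by
  simp [Rpoly, map_ofNat]

lemma aeval_Ppoly {K : Type*} [CommRing K] (m : ℕ → ℕ) (k : ℕ) (z : K) :
    aeval z (Ppoly m k) = z ^ (m (k+1)) * aeval z (Rpoly m k)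
      + (-1 : K) ^ (k+1) * aeval z (Rpoly m k).reverse := by
  simp [Ppoly]

-- reverse evaluation identity
lemma aeval_reverse_eq {K : Type*} [Field K] (f : Polynomial ℤ) {w : K} (hw : w ≠ 0) :
    aeval w f.reverse = w ^ f.natDegree * aeval w⁻¹ f := by
  have h1 : (w⁻¹ : K) ≠ 0 := inv_ne_zero hw
  letI : Invertible (w⁻¹ : K) := invertibleOfNonzero h1
  have h := Polynomial.eval₂_reverse_mul_pow (algebraMap ℤ K) w⁻¹ f
  rw [invOf_eq_inv, inv_inv] at h
  rw [aeval_def, aeval_def, ← h, inv_pow]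
  field_simp

-- casting real evaluation to complex
lemma aeval_intCast_ofReal (f : Polynomial ℤ) (r : ℝ) :
    aeval (r : ℂ) f = ((aeval r f : ℝ) : ℂ) := by
  have h : (algebraMap ℤ ℂ) = (algebraMap ℝ ℂ).comp (algebraMap ℤ ℝ) := by
    ext n; simp
  rw [aeval_def, aeval_def, h, ← Polynomial.eval₂_map]
  have := Polynomial.eval₂_at_apply (f := algebraMap ℝ ℂ) (p := map (algebraMap ℤ ℝ) f) r
  rw [← Polynomial.eval_map (algebraMap ℤ ℝ) r]
  exact this

lemma abs_aeval_ofReal (f : Polynomial ℤ) (r : ℝ) :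
    Complex.abs (aeval (r : ℂ) f) = |aeval r f| := by
  rw [aeval_intCast_ofReal, Complex.abs_ofReal]

-- adding a lower-degree polynomial to a monic one
lemma monic_add_of_natDegree_lt {p q : Polynomial ℤ} (hp : p.Monic)
    (h : q.natDegree < p.natDegree) : (p + q).Monic ∧ (p + q).natDegree = p.natDegree := by
  have hd : (p + q).natDegree = p.natDegree :=
    natDegree_add_eq_left_of_natDegree_lt h
  constructor
  · unfold Monic leadingCoeff
    rw [hd, coeff_add, coeff_eq_zero_of_natDegree_lt h, add_zero]
    exact hp
  · exact hd

lemma abs_add_lower (u v : ℂ) : Complex.abs u - Complex.abs v ≤ Complex.abs (u + v) := by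
  have := Complex.abs.le_sub u (-v)
  simpa [sub_neg_eq_add] using this

lemma monic_X_sub_one : (X - 1 : Polynomial ℤ).Monic := by
  simpa using monic_X_sub_C (1 : ℤ)

lemma natDegree_X_sub_one : (X - 1 : Polynomial ℤ).natDegree = 1 := by
  simpa using natDegree_X_sub_C (1 : ℤ)

lemma natDegree_two_X_le : (2 * X : Polynomial ℤ).natDegree ≤ 1 := by
  apply le_trans (natDegree_mul_le)
  simp

lemma Rpoly_monic_deg (m : ℕ → ℕ) :
    ∀ i, 1 ≤ i → (∀ j, 1 ≤ j → j ≤ i → 1 ≤ m j) →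
    (Rpoly m i).Monic ∧ (Rpoly m i).natDegree = Dd m i := by
  intro i
  induction i with
  | zero => intro h; omega
  | succ n ih =>
    intro _ hm
    by_cases hn : n = 0
    · subst hn
      have hA : (X ^ (m 1 + 1) * (X - 1) : Polynomial ℤ).Monic :=
        (monic_X_pow _).mul monic_X_sub_one
      have hAdeg : (X ^ (m 1 + 1) * (X - 1) : Polynomial ℤ).natDegree = m 1 + 2 := by
        rw [(monic_X_pow _).natDegree_mul monic_X_sub_one, natDegree_X_pow, natDegree_X_sub_one]
      have hq : (-(2 * X) : Polynomial ℤ).natDegree < (X ^ (m 1 + 1) * (X - 1) : Polynomial ℤ).natDegree := by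
        rw [hAdeg, natDegree_neg]
        have := natDegree_two_X_le
        omega
      have hR : Rpoly m 1 = X ^ (m 1 + 1) * (X - 1) + -(2 * X) := by
        rw [Rpoly, sub_eq_add_neg]
      obtain ⟨h1, h2⟩ := monic_add_of_natDegree_lt hA hq
      rw [hR, Dd_one]
      exact ⟨h1, by rw [h2, hAdeg]⟩
    · have hn1 : 1 ≤ n := by omega
      obtain ⟨hmon, hdeg⟩ := ih hn1 (fun j h1 h2 => hm j h1 (by omega))
      obtain ⟨j, rfl⟩ : ∃ j, n = j + 1 := ⟨n - 1, by omega⟩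
      have hA : (X ^ (m (j+2)) * (X - 1) * Rpoly m (j+1)).Monic :=
        ((monic_X_pow _).mul monic_X_sub_one).mul hmon
      have hAdeg : (X ^ (m (j+2)) * (X - 1) * Rpoly m (j+1)).natDegree
          = m (j+2) + 1 + Dd m (j+1) := by
        rw [((monic_X_pow _).mul monic_X_sub_one).natDegree_mul hmon,
          (monic_X_pow _).natDegree_mul monic_X_sub_one, natDegree_X_pow,
          natDegree_X_sub_one, hdeg]
      have hBle : ((-1 : Polynomial ℤ) ^ (j+2) * (2 * X) * (Rpoly m (j+1)).reverse).natDegree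
          ≤ Dd m (j+1) + 1 := by
        apply le_trans natDegree_mul_le
        have h1 : ((-1 : Polynomial ℤ) ^ (j+2) * (2 * X)).natDegree ≤ 1 := by
          apply le_trans natDegree_mul_le
          have : ((-1 : Polynomial ℤ) ^ (j+2)).natDegree = 0 := by
            simp [natDegree_pow]
          have := natDegree_two_X_le
          omega
        have h2 : (Rpoly m (j+1)).reverse.natDegree ≤ Dd m (j+1) :=
          le_trans (reverse_natDegree_le _) hdeg.le
        omega
      have hq : ((-1 : Polynomial ℤ) ^ (j+2) * (2 * X) * (Rpoly m (j+1)).reverse).natDegree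
          < (X ^ (m (j+2)) * (X - 1) * Rpoly m (j+1)).natDegree := by
        rw [hAdeg]
        have hm2 : 1 ≤ m (j+2) := hm (j+2) (by omega) (by omega)
        omega
      obtain ⟨h1, h2⟩ := monic_add_of_natDegree_lt hA hq
      rw [show Rpoly m (j+2) = X ^ (m (j+2)) * (X - 1) * Rpoly m (j+1)
        + (-1 : Polynomial ℤ) ^ (j+2) * (2 * X) * (Rpoly m (j+1)).reverse from rfl]
      refine ⟨h1, ?_⟩
      rw [h2, hAdeg, Dd_succ m (j+1)]

lemma Ppoly_monic_deg (m : ℕ → ℕ) (k : ℕ) (hk : 1 ≤ k)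
    (hm : ∀ j, 1 ≤ j → j ≤ k + 1 → 1 ≤ m j) :
    (Ppoly m k).Monic ∧ (Ppoly m k).natDegree = m (k+1) + Dd m k := by
  obtain ⟨hmon, hdeg⟩ := Rpoly_monic_deg m k hk (fun j h1 h2 => hm j h1 (by omega))
  have hA : (X ^ (m (k+1)) * Rpoly m k).Monic := (monic_X_pow _).mul hmon
  have hAdeg : (X ^ (m (k+1)) * Rpoly m k).natDegree = m (k+1) + Dd m k := by
    rw [(monic_X_pow _).natDegree_mul hmon, natDegree_X_pow, hdeg]
  have hq : ((-1 : Polynomial ℤ) ^ (k+1) * (Rpoly m k).reverse).natDegree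
      < (X ^ (m (k+1)) * Rpoly m k).natDegree := by
    rw [hAdeg]
    have h1 : ((-1 : Polynomial ℤ) ^ (k+1) * (Rpoly m k).reverse).natDegree ≤ Dd m k := by
      apply le_trans natDegree_mul_le
      have : ((-1 : Polynomial ℤ) ^ (k+1)).natDegree = 0 := by simp [natDegree_pow]
      have := le_trans (reverse_natDegree_le (Rpoly m k)) hdeg.le
      omega
    have hm1 : 1 ≤ m (k+1) := hm (k+1) (by omega) (by omega)
    omega
  obtain ⟨h1, h2⟩ := monic_add_of_natDegree_lt hA hq
  exact ⟨h1, by rw [Ppoly] at *; rw [h2, hAdeg]⟩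

lemma mul_le_mul3 {a b c a' b' c' : ℝ} (ha : a ≤ a') (hb : b ≤ b') (hc : c ≤ c')
    (hb0 : 0 ≤ b) (hc0 : 0 ≤ c) (ha0' : 0 ≤ a') (hb0' : 0 ≤ b') :
    a * b * c ≤ a' * b' * c' :=
  mul_le_mul (mul_le_mul ha hb hb0 ha0') hc hc0 (mul_nonneg ha0' hb0')

section RevBounds

variable {m : ℕ → ℕ} {i : ℕ}

/-- bound on `reverse` on `|z| ≥ 1` from the small bound on the polynomial. -/
lemma rev_bound_big (hmon : (Rpoly m i).Monic) (hdeg : (Rpoly m i).natDegree = Dd m i)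
    (hsmall : ∀ z : ℂ, Complex.abs z ≤ 1 → Complex.abs (aeval z (Rpoly m i)) ≤ 4 ^ i)
    (z : ℂ) (hz : 1 ≤ Complex.abs z) :
    Complex.abs (aeval z (Rpoly m i).reverse) ≤ 4 ^ i * Complex.abs z ^ (Dd m i) := by
  have hz0 : z ≠ 0 := by
    intro h; rw [h] at hz; simp at hz; linarith
  rw [aeval_reverse_eq _ hz0, hdeg, map_mul, map_pow]
  have h1 : Complex.abs z⁻¹ ≤ 1 := by
    rw [map_inv₀]
    exact inv_le_one_of_one_le₀ hz
  have h2 := hsmall z⁻¹ h1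
  calc Complex.abs z ^ (Dd m i) * Complex.abs (aeval z⁻¹ (Rpoly m i))
      ≤ Complex.abs z ^ (Dd m i) * 4 ^ i :=
        mul_le_mul_of_nonneg_left h2 (by positivity)
    _ = 4 ^ i * Complex.abs z ^ (Dd m i) := by ring

lemma rev_bound_small (hmon : (Rpoly m i).Monic) (hdeg : (Rpoly m i).natDegree = Dd m i)
    (hbig : ∀ z : ℂ, 1 ≤ Complex.abs z →
      Complex.abs (aeval z (Rpoly m i)) ≤ 4 ^ i * Complex.abs z ^ (Dd m i))
    (z : ℂ) (hz : Complex.abs z ≤ 1) :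
    Complex.abs (aeval z (Rpoly m i).reverse) ≤ 4 ^ i := by
  by_cases hz0 : z = 0
  · subst hz0
    have h0 : aeval (0 : ℂ) (Rpoly m i).reverse
        = algebraMap ℤ ℂ ((Rpoly m i).reverse.coeff 0) := by
      rw [aeval_def, eval₂_at_zero]
    rw [h0, coeff_zero_reverse, Monic.leadingCoeff hmon]
    simp
    exact one_le_pow₀ (by norm_num)
  · have habs0 : 0 < Complex.abs z := Complex.abs.pos hz0
    have hz1 : 1 ≤ Complex.abs z⁻¹ := by
      rw [map_inv₀]
      exact (one_le_inv₀ habs0).2 hz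
    have h2 := hbig z⁻¹ hz1
    rw [map_inv₀] at h2
    rw [aeval_reverse_eq _ hz0, hdeg, map_mul, map_pow]
    calc Complex.abs z ^ (Dd m i) * Complex.abs (aeval z⁻¹ (Rpoly m i))
        ≤ Complex.abs z ^ (Dd m i) * (4 ^ i * ((Complex.abs z)⁻¹) ^ (Dd m i)) :=
          mul_le_mul_of_nonneg_left h2 (by positivity)
      _ = 4 ^ i * (Complex.abs z * (Complex.abs z)⁻¹) ^ (Dd m i) := by
          rw [mul_pow]; ring
      _ = 4 ^ i := by rw [mul_inv_cancel₀ (ne_of_gt habs0), one_pow, mul_one]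

end RevBounds

section Machine

/-- IVT + sup-of-zeros machine. -/
lemma root_machine {f : Polynomial ℤ} {a b : ℝ} (hab : a ≤ b)
    (hfa : aeval a f < 0) (hfb : 0 < aeval b f) :
    ∃ ρ, a < ρ ∧ ρ < b ∧ aeval ρ f = 0 ∧ ∀ t, ρ < t → t ≤ b → 0 < aeval t f := by
  have hcont : Continuous fun t : ℝ => aeval t f := Polynomial.continuous_aeval f
  set Z : Set ℝ := Set.Icc a b ∩ (fun t : ℝ => aeval t f) ⁻¹' {0} with hZ
  have hZcomp : IsCompact Z := isCompact_Icc.inter_right (isClosed_singleton.preimage hcont)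
  have hZne : Z.Nonempty := by
    have h0 : (0:ℝ) ∈ Set.Icc (aeval a f) (aeval b f) := ⟨hfa.le, hfb.le⟩
    obtain ⟨x, hx, hgx⟩ := intermediate_value_Icc hab hcont.continuousOn h0
    exact ⟨x, hx, by simpa using hgx⟩
  have hmem : sSup Z ∈ Z := hZcomp.sSup_mem hZne
  set ρ := sSup Z with hρdef
  have hρa : a ≤ ρ := hmem.1.1
  have hρb : ρ ≤ b := hmem.1.2
  have hρ0 : aeval ρ f = 0 := by simpa using hmem.2
  have h1 : a < ρ := lt_of_le_of_ne hρa (by intro h; rw [← h] at hρ0; linarith)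
  have h2 : ρ < b := lt_of_le_of_ne hρb (by intro h; rw [h] at hρ0; linarith)
  refine ⟨ρ, h1, h2, hρ0, ?_⟩
  intro t hρt htb
  by_contra hle
  push_neg at hle
  obtain ⟨y, hy, hgy⟩ := intermediate_value_Icc htb hcont.continuousOn ⟨hle, hfb.le⟩
  have hyZ : y ∈ Z := ⟨⟨le_trans (le_trans hρa hρt.le) hy.1, hy.2⟩, by simpa using hgy⟩
  have := le_csSup hZcomp.bddAbove hyZ
  linarith [hy.1]

end Machine

/-- All the analytic facts about `Rpoly m i` proved by simultaneous induction. -/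
structure KT (m : ℕ → ℕ) (δ γ : ℝ) (i : ℕ) : Prop where
  small : ∀ z : ℂ, Complex.abs z ≤ 1 → Complex.abs (aeval z (Rpoly m i)) ≤ 4 ^ i
  big : ∀ z : ℂ, 1 ≤ Complex.abs z →
      Complex.abs (aeval z (Rpoly m i)) ≤ 4 ^ i * Complex.abs z ^ (Dd m i)
  lower : ∀ z : ℂ, 1 + δ ≤ Complex.abs z →
      γ ^ i * Complex.abs z ^ (Dd m i) ≤ Complex.abs (aeval z (Rpoly m i))
  posAt : γ ^ i * (1 + δ) ^ (Dd m i) ≤ aeval (1 + δ : ℝ) (Rpoly m i)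
  rt : ∃ ρ : ℝ, 1 < ρ ∧ ρ < 1 + δ ∧ aeval ρ (Rpoly m i) = 0 ∧
      (∀ t : ℝ, ρ < t → t ≤ 1 + δ → 0 < aeval t (Rpoly m i)) ∧
      (∀ t : ℝ, ρ ≤ t → t ≤ 1 + δ → 0 < (-1 : ℝ) ^ i * aeval t⁻¹ (Rpoly m i))

section Aux

variable {δ γ : ℝ} {M : ℕ}

lemma gap_lemma (hδ : 0 < δ) (hγ : γ = δ / (2*(1+δ))) {r : ℝ} (hr : 1 + δ ≤ r) :
    2 * γ * r ≤ r - 1 := by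
  have h1 : (0:ℝ) < 1 + δ := by linarith
  have h2 : 2 * γ * (1+δ) = δ := by rw [hγ]; field_simp
  nlinarith [h2, hr, hδ]

lemma pow_ge_lemma (hδ : 0 < δ) {n : ℕ} {r : ℝ} (hn : M ≤ n) (hr : 1 + δ ≤ r) :
    (1 + δ) ^ M ≤ r ^ n := by
  have h1 : (1:ℝ) ≤ 1 + δ := by linarith
  exact le_trans (pow_le_pow_right₀ h1 hn) (pow_le_pow_left₀ (by linarith) hr n)

lemma gamma_pos (hδ : 0 < δ) (hγ : γ = δ / (2*(1+δ))) : 0 < γ := by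
  rw [hγ]; positivity

end Aux

section Base

variable {m : ℕ → ℕ} {δ γ : ℝ} {M : ℕ}

lemma KT_base (hδ : 0 < δ) (hγ : γ = δ / (2*(1+δ)))
    (hm1 : M ≤ m 1) (hMp : (2:ℝ) ≤ γ * (1+δ)^M) : KT m δ γ 1 := by
  have hγpos : 0 < γ := gamma_pos hδ hγ
  have h1δ : (1:ℝ) < 1 + δ := by linarith
  have h2γδ : 2 * γ * (1+δ) = δ := by rw [hγ]; field_simp
  -- the two pointwise estimates used repeatedly
  have hpowM : ∀ r : ℝ, 1 + δ ≤ r → (2:ℝ) ≤ γ * r ^ (m 1 + 1) := by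
    intro r hr
    have h1 := mul_le_mul_of_nonneg_left
      (pow_ge_lemma hδ (le_trans hm1 (by omega : m 1 ≤ m 1 + 1)) hr) hγpos.le
    linarith
  have hsmall : ∀ z : ℂ, Complex.abs z ≤ 1 → Complex.abs (aeval z (Rpoly m 1)) ≤ 4 ^ 1 := by
    intro z hz
    rw [aeval_Rpoly_one, sub_eq_add_neg]
    have e1 : Complex.abs (z ^ (m 1 + 1) * (z - 1))
        = Complex.abs z ^ (m 1 + 1) * Complex.abs (z - 1) := by rw [map_mul, map_pow]
    have e2 : Complex.abs (-(2 * z)) = 2 * Complex.abs z := by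
      rw [AbsoluteValue.map_neg, map_mul]; norm_num
    have a1 : Complex.abs z ^ (m 1 + 1) ≤ 1 := pow_le_one₀ (Complex.abs.nonneg z) hz
    have a2 : Complex.abs (z - 1) ≤ 2 := by
      have h := Complex.abs.add_le z (-1)
      rw [← sub_eq_add_neg, AbsoluteValue.map_neg, map_one] at h
      linarith
    have a3 := Complex.abs.add_le (z ^ (m 1 + 1) * (z - 1)) (-(2 * z))
    rw [e1, e2] at a3
    have h4 : Complex.abs z ^ (m 1 + 1) * Complex.abs (z - 1) ≤ 2 := by
      nlinarith [Complex.abs.nonneg (z - 1), Complex.abs.nonneg z]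
    norm_num
    nlinarith [a3, hz]
  have hbig : ∀ z : ℂ, 1 ≤ Complex.abs z →
      Complex.abs (aeval z (Rpoly m 1)) ≤ 4 ^ 1 * Complex.abs z ^ (Dd m 1) := by
    intro z hz
    set r := Complex.abs z with hr
    have hr0 : 0 ≤ r := Complex.abs.nonneg z
    rw [aeval_Rpoly_one, sub_eq_add_neg, Dd_one]
    have a3 := Complex.abs.add_le (z ^ (m 1 + 1) * (z - 1)) (-(2 * z))
    have e1 : Complex.abs (z ^ (m 1 + 1) * (z - 1)) = r ^ (m 1 + 1) * Complex.abs (z - 1) := by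
      rw [map_mul, map_pow]
    have e2 : Complex.abs (-(2 * z)) = 2 * r := by rw [AbsoluteValue.map_neg, map_mul]; norm_num; rfl
    rw [e1, e2] at a3
    have a2 : Complex.abs (z - 1) ≤ 2 * r := by
      have h := Complex.abs.add_le z (-1)
      rw [← sub_eq_add_neg, AbsoluteValue.map_neg, map_one] at h
      linarith
    have hpow : r ^ (m 1 + 2) = r ^ (m 1 + 1) * r := by rw [pow_succ]
    have hrpow1 : r ≤ r ^ (m 1 + 1) := by
      calc r = r ^ 1 := (pow_one r).symm
      _ ≤ r ^ (m 1 + 1) := pow_le_pow_right₀ hz (by omega)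
    have t1 : r ^ (m 1 + 1) * Complex.abs (z - 1) ≤ 2 * r ^ (m 1 + 2) := by
      rw [hpow]
      nlinarith [pow_nonneg hr0 (m 1 + 1), Complex.abs.nonneg (z - 1)]
    have t2 : 2 * r ≤ 2 * r ^ (m 1 + 2) := by
      rw [hpow]
      nlinarith
    nlinarith [a3]
  have hlower : ∀ z : ℂ, 1 + δ ≤ Complex.abs z →
      γ ^ 1 * Complex.abs z ^ (Dd m 1) ≤ Complex.abs (aeval z (Rpoly m 1)) := by
    intro z hz
    set r := Complex.abs z with hr
    have hr1 : (1:ℝ) ≤ r := by linarith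
    have hr0 : (0:ℝ) < r := by linarith
    rw [aeval_Rpoly_one, sub_eq_add_neg, Dd_one, pow_one]
    have a0 := abs_add_lower (z ^ (m 1 + 1) * (z - 1)) (-(2 * z))
    have e1 : Complex.abs (z ^ (m 1 + 1) * (z - 1)) = r ^ (m 1 + 1) * Complex.abs (z - 1) := by
      rw [map_mul, map_pow]
    have e2 : Complex.abs (-(2 * z)) = 2 * r := by rw [AbsoluteValue.map_neg, map_mul]; norm_num; rfl
    rw [e1, e2] at a0
    have a2 : r - 1 ≤ Complex.abs (z - 1) := by
      have h := Complex.abs.le_sub z 1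
      simpa using h
    have agap : 2 * γ * r ≤ r - 1 := gap_lemma hδ hγ hz
    have hpow : r ^ (m 1 + 2) = r ^ (m 1 + 1) * r := by rw [pow_succ]
    have hpos : (0:ℝ) < r ^ (m 1 + 1) := pow_pos hr0 _
    have t1 : 2 * γ * r ^ (m 1 + 2) ≤ r ^ (m 1 + 1) * Complex.abs (z - 1) := by
      rw [hpow]
      nlinarith [agap, hpos]
    have t2 : 2 * r ≤ γ * r ^ (m 1 + 2) := by
      have := hpowM r hz
      rw [hpow]
      nlinarith [hr0, hpos, this]
    nlinarith [a0, t1, t2]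
  have hposAt : γ ^ 1 * (1 + δ) ^ (Dd m 1) ≤ aeval (1 + δ : ℝ) (Rpoly m 1) := by
    rw [aeval_Rpoly_one, Dd_one, pow_one]
    set t : ℝ := 1 + δ with ht
    have htpos : (0:ℝ) < t := by rw [ht]; linarith
    have hpow : t ^ (m 1 + 2) = t ^ (m 1 + 1) * t := by rw [pow_succ]
    have hpos : (0:ℝ) < t ^ (m 1 + 1) := pow_pos htpos _
    have h2 : (2:ℝ) ≤ γ * t ^ (m 1 + 1) := hpowM t (le_refl _)
    have ht1 : t - 1 = δ := by rw [ht]; ring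
    have e : t ^ (m 1 + 1) * (t - 1) - 2 * t = t ^ (m 1 + 1) * (2 * γ * t) - 2 * t := by
      rw [ht1, ← h2γδ, ht]
    rw [e, hpow]
    nlinarith [hpos, htpos, h2]
  refine ⟨hsmall, hbig, hlower, hposAt, ?_⟩
  · -- root
    have hneg : aeval (1:ℝ) (Rpoly m 1) < 0 := by
      rw [aeval_Rpoly_one]; norm_num
    have hposb : 0 < aeval (1 + δ : ℝ) (Rpoly m 1) := by
      have : (0:ℝ) < γ ^ 1 * (1 + δ) ^ (Dd m 1) := by positivity
      linarith
    obtain ⟨ρ, h1, h2, h0, hPos⟩ := root_machine (by linarith : (1:ℝ) ≤ 1 + δ) hneg hposb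
    refine ⟨ρ, h1, h2, h0, hPos, ?_⟩
    intro t hρt htδ
    have ht1 : 1 < t := lt_of_lt_of_le h1 hρt
    have hti : 0 < t⁻¹ := by positivity
    have hti1 : t⁻¹ < 1 := inv_lt_one_of_one_lt₀ ht1
    rw [aeval_Rpoly_one, pow_one]
    have hp : (0:ℝ) < t⁻¹ ^ (m 1 + 1) := pow_pos hti _
    have key : 0 < t⁻¹ ^ (m 1 + 1) * (1 - t⁻¹) + 2 * t⁻¹ :=
      add_pos (mul_pos hp (by linarith)) (by linarith)
    have e : -1 * (t⁻¹ ^ (m 1 + 1) * (t⁻¹ - 1) - 2 * t⁻¹)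
        = t⁻¹ ^ (m 1 + 1) * (1 - t⁻¹) + 2 * t⁻¹ := by ring
    rw [e]
    exact key

section Step

variable {m : ℕ → ℕ} {δ γ : ℝ} {M : ℕ}

lemma KT_step (j : ℕ) (hδ : 0 < δ) (hγ : γ = δ / (2*(1+δ)))
    (hmon : (Rpoly m (j+1)).Monic) (hdeg : (Rpoly m (j+1)).natDegree = Dd m (j+1))
    (hmM : M ≤ m (j+2)) (hMp : 2 * 4^(j+1) ≤ γ^(j+2) * (1+δ)^M)
    (h : KT m δ γ (j+1)) : KT m δ γ (j+2) := by
  have hγpos : 0 < γ := gamma_pos hδ hγ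
  have h1δ : (1:ℝ) < 1 + δ := by linarith
  have h2γδ : 2 * γ * (1+δ) = δ := by rw [hγ]; field_simp
  set D := Dd m (j+1) with hD
  have hDn : Dd m (j+2) = m (j+2) + 1 + D := Dd_succ m (j+1)
  have habs1 : Complex.abs ((-1:ℂ)^(j+2)) = 1 := by
    rw [map_pow, AbsoluteValue.map_neg, map_one, one_pow]
  have hsg : ((-1:ℝ))^(j+2) = -((-1:ℝ)^(j+1)) := by rw [pow_succ]; ring
  have hc2 : ((-1:ℝ)^(j+1)) * ((-1:ℝ)^(j+1)) = 1 := by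
    rw [← pow_add]
    exact Even.neg_one_pow ⟨j+1, by ring⟩
  have hkey : ∀ r : ℝ, 1 + δ ≤ r → 2 * 4^(j+1) ≤ γ^(j+2) * r^(m (j+2)) := by
    intro r hr
    have h1 := mul_le_mul_of_nonneg_left (pow_ge_lemma hδ hmM hr)
      (by positivity : (0:ℝ) ≤ γ^(j+2))
    linarith
  -- small
  have hsmall : ∀ z : ℂ, Complex.abs z ≤ 1 →
      Complex.abs (aeval z (Rpoly m (j+2))) ≤ 4 ^ (j+2) := by
    intro z hz
    have hz0 : (0:ℝ) ≤ Complex.abs z := Complex.abs.nonneg z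
    rw [aeval_Rpoly_two]
    have hA : Complex.abs (z ^ (m (j+2)) * (z - 1) * aeval z (Rpoly m (j+1)))
        ≤ 1 * 2 * 4 ^ (j+1) := by
      rw [map_mul, map_mul, map_pow]
      refine mul_le_mul3 (pow_le_one₀ hz0 hz) ?_ (h.small z hz)
        (Complex.abs.nonneg _) (Complex.abs.nonneg _) zero_le_one (by norm_num)
      have hb := Complex.abs.add_le z (-1)
      rw [← sub_eq_add_neg, AbsoluteValue.map_neg, map_one] at hb
      linarith
    have hB : Complex.abs ((-1:ℂ) ^ (j+2) * (2 * z) * aeval z (Rpoly m (j+1)).reverse)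
        ≤ 1 * 2 * 4 ^ (j+1) := by
      rw [map_mul, map_mul, habs1, map_mul]
      have : Complex.abs 2 * Complex.abs z ≤ 2 := by
        have : Complex.abs (2:ℂ) = 2 := by norm_num
        nlinarith
      refine mul_le_mul3 le_rfl this (rev_bound_small hmon hdeg h.big z hz)
        (by positivity) (Complex.abs.nonneg _) zero_le_one (by norm_num)
    have hadd := Complex.abs.add_le (z ^ (m (j+2)) * (z - 1) * aeval z (Rpoly m (j+1)))
      ((-1:ℂ) ^ (j+2) * (2 * z) * aeval z (Rpoly m (j+1)).reverse)
    have h4 : (4:ℝ)^(j+2) = 4^(j+1) * 4 := pow_succ 4 (j+1)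
    linarith
  -- big
  have hbig : ∀ z : ℂ, 1 ≤ Complex.abs z →
      Complex.abs (aeval z (Rpoly m (j+2))) ≤ 4 ^ (j+2) * Complex.abs z ^ (Dd m (j+2)) := by
    intro z hz
    set r := Complex.abs z with hr
    have hr0 : (0:ℝ) < r := by linarith
    have hsplit : r ^ (m (j+2) + 1 + D) = r ^ (m (j+2)) * r * r ^ D := by
      rw [pow_add, pow_add, pow_one]
    have hb : Complex.abs (z - 1) ≤ 2 * r := by
      have hb := Complex.abs.add_le z (-1)
      rw [← sub_eq_add_neg, AbsoluteValue.map_neg, map_one] at hb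
      linarith
    have hA : Complex.abs (z ^ (m (j+2)) * (z - 1) * aeval z (Rpoly m (j+1)))
        ≤ r ^ (m (j+2)) * (2 * r) * (4 ^ (j+1) * r ^ D) := by
      rw [map_mul, map_mul, map_pow]
      exact mul_le_mul3 le_rfl hb (h.big z hz) (Complex.abs.nonneg _)
        (Complex.abs.nonneg _) (by positivity) (by positivity)
    have hB : Complex.abs ((-1:ℂ) ^ (j+2) * (2 * z) * aeval z (Rpoly m (j+1)).reverse)
        ≤ 1 * (2 * r) * (4 ^ (j+1) * r ^ D) := by
      rw [map_mul, map_mul, habs1, map_mul]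
      have h2 : Complex.abs 2 * Complex.abs z = 2 * r := by
        have : Complex.abs (2:ℂ) = 2 := by norm_num
        rw [this]
      refine mul_le_mul3 le_rfl (le_of_eq h2) (rev_bound_big hmon hdeg h.small z hz)
        (by positivity) (Complex.abs.nonneg _) zero_le_one (by positivity)
    have hadd := Complex.abs.add_le (z ^ (m (j+2)) * (z - 1) * aeval z (Rpoly m (j+1)))
      ((-1:ℂ) ^ (j+2) * (2 * z) * aeval z (Rpoly m (j+1)).reverse)
    have hone : (1:ℝ) ≤ r ^ (m (j+2)) := one_le_pow₀ hz
    have hEnn : (0:ℝ) ≤ r * r ^ D := by positivity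
    have h1 : 1 * (2 * r) * (4 ^ (j+1) * r ^ D)
        ≤ r ^ (m (j+2)) * (2 * r) * (4 ^ (j+1) * r ^ D) := by
      refine mul_le_mul_of_nonneg_right ?_ (by positivity)
      refine mul_le_mul_of_nonneg_right hone (by linarith)
    have h4 : (4:ℝ)^(j+2) = 4^(j+1) * 4 := pow_succ 4 (j+1)
    have e1 : r ^ m (j+2) * (2*r) * (4^(j+1) * r^D)
        = 2*(4^(j+1)*(r ^ m (j+2) * r * r^D)) := by ring
    have e2 : (4:ℝ)^(j+2) * (r ^ m (j+2) * r * r^D)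
        = 4*(4^(j+1)*(r ^ m (j+2) * r * r^D)) := by rw [h4]; ring
    rw [aeval_Rpoly_two, hDn, hsplit]
    linarith [hadd, hA, hB, h1, e1, e2]
  -- lower
  have hlower : ∀ z : ℂ, 1 + δ ≤ Complex.abs z →
      γ ^ (j+2) * Complex.abs z ^ (Dd m (j+2)) ≤ Complex.abs (aeval z (Rpoly m (j+2))) := by
    intro z hz
    set r := Complex.abs z with hr
    have hr0 : (0:ℝ) < r := by linarith
    have hz1 : (1:ℝ) ≤ r := by linarith
    have hsplit : r ^ (m (j+2) + 1 + D) = r ^ (m (j+2)) * r * r ^ D := by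
      rw [pow_add, pow_add, pow_one]
    have hgap : 2 * γ * r ≤ r - 1 := gap_lemma hδ hγ hz
    have hsub : r - 1 ≤ Complex.abs (z - 1) := by
      have hb := Complex.abs.le_sub z 1
      simpa using hb
    have hA : r ^ (m (j+2)) * (2 * γ * r) * (γ ^ (j+1) * r ^ D)
        ≤ Complex.abs (z ^ (m (j+2)) * (z - 1) * aeval z (Rpoly m (j+1))) := by
      rw [map_mul, map_mul, map_pow]
      exact mul_le_mul3 le_rfl (by linarith) (h.lower z hz) (by positivity)
        (by positivity) (by positivity) (Complex.abs.nonneg _)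
    have hB : Complex.abs ((-1:ℂ) ^ (j+2) * (2 * z) * aeval z (Rpoly m (j+1)).reverse)
        ≤ 1 * (2 * r) * (4 ^ (j+1) * r ^ D) := by
      rw [map_mul, map_mul, habs1, map_mul]
      have h2 : Complex.abs 2 * Complex.abs z = 2 * r := by
        have : Complex.abs (2:ℂ) = 2 := by norm_num
        rw [this]
      refine mul_le_mul3 le_rfl (le_of_eq h2) (rev_bound_big hmon hdeg h.small z hz1)
        (by positivity) (Complex.abs.nonneg _) zero_le_one (by positivity)
    have hadd := abs_add_lower (z ^ (m (j+2)) * (z - 1) * aeval z (Rpoly m (j+1)))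
      ((-1:ℂ) ^ (j+2) * (2 * z) * aeval z (Rpoly m (j+1)).reverse)
    have hBk : 1 * (2 * r) * (4 ^ (j+1) * r ^ D) ≤ γ^(j+2) * (r ^ (m (j+2)) * r * r ^ D) := by
      have hk := hkey r hz
      have hEnn : (0:ℝ) ≤ r * r ^ D := by positivity
      calc 1 * (2 * r) * (4 ^ (j+1) * r ^ D) = (2 * 4^(j+1)) * (r * r^D) := by ring
        _ ≤ (γ^(j+2) * r ^ (m (j+2))) * (r * r^D) := mul_le_mul_of_nonneg_right hk hEnn
        _ = γ^(j+2) * (r ^ (m (j+2)) * r * r ^ D) := by ring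
    have e3 : r ^ m (j+2) * (2*γ*r) * (γ^(j+1) * r^D)
        = 2*(γ^(j+2)*(r ^ m (j+2) * r * r^D)) := by ring
    rw [aeval_Rpoly_two, hDn, hsplit]
    linarith [hadd, hA, hB, hBk, e3]
  -- posAt
  have hvbound : ∀ t : ℝ, 1 ≤ t →
      |aeval t (Rpoly m (j+1)).reverse| ≤ 4^(j+1) * t^D := by
    intro t ht
    have h1 : (1:ℝ) ≤ Complex.abs (t:ℂ) := by
      rw [Complex.abs_ofReal, abs_of_pos (by linarith)]
      exact ht
    have h2 := rev_bound_big hmon hdeg h.small (t:ℂ) h1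
    rw [abs_aeval_ofReal, Complex.abs_ofReal, abs_of_pos (by linarith : (0:ℝ) < t)] at h2
    exact h2
  have hubound : ∀ t : ℝ, |t| ≤ 1 → |aeval t (Rpoly m (j+1))| ≤ 4^(j+1) := by
    intro t ht
    have h1 : Complex.abs (t:ℂ) ≤ 1 := by rw [Complex.abs_ofReal]; exact ht
    have h2 := h.small (t:ℂ) h1
    rwa [abs_aeval_ofReal] at h2
  have hposAt : γ ^ (j+2) * (1 + δ) ^ (Dd m (j+2)) ≤ aeval (1 + δ : ℝ) (Rpoly m (j+2)) := by
    set t : ℝ := 1 + δ with ht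
    have htpos : (0:ℝ) < t := by rw [ht]; linarith
    have ht1 : (1:ℝ) ≤ t := by rw [ht]; linarith
    have hsplit : t ^ (m (j+2) + 1 + D) = t ^ (m (j+2)) * t * t ^ D := by
      rw [pow_add, pow_add, pow_one]
    have hu := h.posAt
    rw [← ht, ← hD] at hu
    have hv := hvbound t ht1
    set v := aeval t (Rpoly m (j+1)).reverse with hvdef
    set u := aeval t (Rpoly m (j+1)) with hudef
    have habsv : |(-1:ℝ)^(j+2) * (2*t) * v| = 2*t*|v| := by
      rw [abs_mul, abs_mul, abs_pow, abs_neg, abs_one, one_pow, one_mul,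
        abs_of_pos (by linarith : (0:ℝ) < 2*t)]
    have hterm2 : -(2*t*|v|) ≤ (-1:ℝ)^(j+2) * (2*t) * v := by
      have := neg_abs_le ((-1:ℝ)^(j+2) * (2*t) * v)
      rw [habsv] at this
      exact this
    have hδt : t - 1 = 2 * γ * t := by rw [h2γδ, ht]; ring
    have hmain : t ^ (m (j+2)) * (2*γ*t) * (γ^(j+1) * t^D) ≤ t ^ (m (j+2)) * (t-1) * u := by
      calc t ^ (m (j+2)) * (2*γ*t) * (γ^(j+1) * t^D)
          ≤ t ^ (m (j+2)) * (2*γ*t) * u := mul_le_mul_of_nonneg_left hu (by positivity)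
        _ = t ^ (m (j+2)) * (t-1) * u := by rw [hδt]
    have hterm2' : 2*t*|v| ≤ γ^(j+2) * (t ^ (m (j+2)) * t * t^D) := by
      have hk := hkey t le_rfl
      have hEnn : (0:ℝ) ≤ t * t^D := by positivity
      calc 2*t*|v| ≤ 2*t*(4^(j+1) * t^D) :=
            mul_le_mul_of_nonneg_left hv (by linarith : (0:ℝ) ≤ 2*t)
        _ = (2 * 4^(j+1)) * (t * t^D) := by ring
        _ ≤ (γ^(j+2) * t ^ (m (j+2))) * (t * t^D) := mul_le_mul_of_nonneg_right hk hEnn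
        _ = γ^(j+2) * (t ^ (m (j+2)) * t * t^D) := by ring
    have e4 : t ^ m (j+2) * (2*γ*t) * (γ^(j+1) * t^D)
        = 2*(γ^(j+2)*(t ^ m (j+2) * t * t^D)) := by ring
    have heq : aeval t (Rpoly m (j+2)) = t ^ (m (j+2)) * (t-1) * u + (-1:ℝ)^(j+2) * (2*t) * v := by
      rw [aeval_Rpoly_two]
    rw [heq, hDn, hsplit]
    linarith [hmain, hterm2, hterm2', e4]
  -- root package
  refine ⟨hsmall, hbig, hlower, hposAt, ?_⟩
  obtain ⟨ρ, hρ1, hρδ, hρ0, hPos, hNeg⟩ := h.rt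
  have hρpos : (0:ℝ) < ρ := by linarith
  have hρne : ρ ≠ 0 := ne_of_gt hρpos
  have hvalρ : aeval ρ (Rpoly m (j+2))
      = (-1:ℝ)^(j+2) * (2*ρ) * (ρ^D * aeval ρ⁻¹ (Rpoly m (j+1))) := by
    rw [aeval_Rpoly_two, aeval_reverse_eq _ hρne, hdeg, hρ0]
    ring
  have hNegρ := hNeg ρ le_rfl hρδ.le
  have hnegval : aeval ρ (Rpoly m (j+2)) < 0 := by
    rw [hvalρ, hsg]
    have h1 : (0:ℝ) < ρ^D := pow_pos hρpos D
    have e : -(-1:ℝ)^(j+1) * (2*ρ) * (ρ^D * aeval ρ⁻¹ (Rpoly m (j+1)))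
        = -(2*ρ*ρ^D*((-1:ℝ)^(j+1) * aeval ρ⁻¹ (Rpoly m (j+1)))) := by ring
    rw [e]
    have h2 : 0 < 2*ρ*ρ^D*((-1:ℝ)^(j+1) * aeval ρ⁻¹ (Rpoly m (j+1))) := by
      refine mul_pos (by positivity) hNegρ
    linarith
  have hposb : 0 < aeval (1+δ:ℝ) (Rpoly m (j+2)) := by
    have : (0:ℝ) < γ^(j+2) * (1+δ)^(Dd m (j+2)) := by positivity
    linarith [hposAt]
  obtain ⟨ρ', h1', h2', h0', hPos'⟩ := root_machine hρδ.le hnegval hposb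
  refine ⟨ρ', by linarith, h2', h0', hPos', ?_⟩
  intro t hρ't htδ
  have hρt : ρ < t := lt_of_lt_of_le h1' hρ't
  have ht1 : (1:ℝ) < t := by linarith
  have ht0 : t ≠ 0 := by positivity
  have hq0 : (0:ℝ) < t⁻¹ := by positivity
  have hq1 : t⁻¹ < 1 := inv_lt_one_of_one_lt₀ ht1
  have hA := hNeg t hρt.le htδ
  have hB := hPos t hρt htδ
  have hexp : aeval t⁻¹ (Rpoly m (j+2))
      = (t⁻¹)^(m (j+2)) * (t⁻¹ - 1) * aeval t⁻¹ (Rpoly m (j+1))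
        + (-1:ℝ)^(j+2) * (2*t⁻¹) * ((t⁻¹)^D * aeval t (Rpoly m (j+1))) := by
    rw [aeval_Rpoly_two, aeval_reverse_eq _ (inv_ne_zero ht0), hdeg, inv_inv]
  have hkeyeq : (-1:ℝ)^(j+2) * aeval t⁻¹ (Rpoly m (j+2))
      = (t⁻¹)^(m (j+2)) * (1 - t⁻¹) * ((-1:ℝ)^(j+1) * aeval t⁻¹ (Rpoly m (j+1)))
        + 2*t⁻¹*(t⁻¹)^D * aeval t (Rpoly m (j+1)) := by
    rw [hexp, hsg]
    linear_combination (2*t⁻¹*(t⁻¹)^D * aeval t (Rpoly m (j+1))) * hc2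
  rw [hkeyeq]
  have hp1 : 0 < (t⁻¹)^(m (j+2)) * (1 - t⁻¹) * ((-1:ℝ)^(j+1) * aeval t⁻¹ (Rpoly m (j+1))) :=
    mul_pos (mul_pos (pow_pos hq0 _) (by linarith)) hA
  have hp2 : 0 < 2*t⁻¹*(t⁻¹)^D * aeval t (Rpoly m (j+1)) :=
    mul_pos (by positivity) hB
  linarith

end Step

section Final

variable {m : ℕ → ℕ} {δ γ : ℝ} {M : ℕ}

lemma rev_bound_real {i : ℕ} (hmon : (Rpoly m i).Monic)
    (hdeg : (Rpoly m i).natDegree = Dd m i)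
    (hsmall : ∀ z : ℂ, Complex.abs z ≤ 1 → Complex.abs (aeval z (Rpoly m i)) ≤ 4 ^ i)
    (t : ℝ) (ht : 1 ≤ t) : |aeval t (Rpoly m i).reverse| ≤ 4^i * t^(Dd m i) := by
  have h1 : (1:ℝ) ≤ Complex.abs (t:ℂ) := by
    rw [Complex.abs_ofReal, abs_of_pos (by linarith)]
    exact ht
  have h2 := rev_bound_big hmon hdeg hsmall (t:ℂ) h1
  rw [abs_aeval_ofReal, Complex.abs_ofReal, abs_of_pos (by linarith : (0:ℝ) < t)] at h2
  exact h2

lemma KT_all (k : ℕ) (hδ : 0 < δ) (hγ : γ = δ / (2*(1+δ)))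
    (hM1 : 1 ≤ M) (hm : ∀ j, 1 ≤ j → j ≤ k → M ≤ m j)
    (hMp : ∀ i, i ≤ k → 2 * 4^i ≤ γ^(i+1) * (1+δ)^M) :
    ∀ i, 1 ≤ i → i ≤ k → KT m δ γ i := by
  intro i
  induction i with
  | zero => omega
  | succ n ih =>
    intro _ hik
    by_cases hn : n = 0
    · subst hn
      have h0 := hMp 0 (by omega)
      norm_num at h0
      exact KT_base hδ hγ (hm 1 le_rfl (by omega)) h0
    · obtain ⟨j, rfl⟩ : ∃ j, n = j + 1 := ⟨n - 1, by omega⟩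
      have hprev := ih (by omega) (by omega)
      obtain ⟨hmon, hdeg⟩ := Rpoly_monic_deg m (j+1) (by omega)
        (fun j' h1 h2 => le_trans hM1 (hm j' h1 (by omega)))
      exact KT_step j hδ hγ hmon hdeg (hm (j+2) (by omega) (by omega))
        (hMp (j+1) (by omega)) hprev

/-- Theorem 1.3(1), polynomial form: for fixed `k ≥ 1`,
`λ(P_{(m_1,…,m_{k+1})}) → 1` as `m_1, …, m_{k+1}` all tend to `∞`. -/
theorem Ppoly_maxRootAbs_tendsto_one (k : ℕ) (hk : 1 ≤ k) :
    ∀ ε : ℝ, 0 < ε → ∃ M : ℕ, 1 ≤ M ∧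
      ∀ m : ℕ → ℕ, (∀ j, 1 ≤ j → j ≤ k + 1 → M ≤ m j) →
        1 < maxRootAbs (Ppoly m k) ∧ maxRootAbs (Ppoly m k) < 1 + ε := by
  intro ε hε
  set δ : ℝ := ε / 2 with hδdef
  have hδ : 0 < δ := by positivity
  set γ : ℝ := δ / (2*(1+δ)) with hγdef
  have hγ : γ = δ / (2*(1+δ)) := rfl
  have hγpos : 0 < γ := gamma_pos hδ hγ
  have h1δ : (1:ℝ) < 1 + δ := by linarith
  have hγ1 : γ < 1 := by
    rw [hγ]
    rw [div_lt_one (by linarith)]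
    linarith
  obtain ⟨M₀, hM₀⟩ := pow_unbounded_of_one_lt ((2 * 4^k) / γ^(k+1)) h1δ
  refine ⟨max M₀ 1, le_max_right _ _, ?_⟩
  set M : ℕ := max M₀ 1 with hMdef
  intro m hm
  have hMp : ∀ i, i ≤ k → 2 * 4^i ≤ γ^(i+1) * (1+δ)^M := by
    intro i hik
    have h1 : (2 * 4^k) / γ^(k+1) < (1+δ)^M :=
      lt_of_lt_of_le hM₀ (pow_le_pow_right₀ (by linarith) (le_max_left _ _))
    have h2 : 2 * 4^k < γ^(k+1) * (1+δ)^M := by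
      rw [div_lt_iff₀ (by positivity)] at h1
      have e : (1+δ)^M * γ^(k+1) = γ^(k+1) * (1+δ)^M := by ring
      linarith
    have h3 : γ^(k+1) ≤ γ^(i+1) := pow_le_pow_of_le_one hγpos.le hγ1.le (by omega)
    have h4 : (2:ℝ) * 4^i ≤ 2 * 4^k := by
      have := pow_le_pow_right₀ (show (1:ℝ) ≤ 4 by norm_num) hik
      linarith
    have h5 : (0:ℝ) < (1+δ)^M := pow_pos (by linarith) M
    have h6 := mul_le_mul_of_nonneg_right h3 h5.le
    linarith
  have hKT := KT_all k hδ hγ (le_max_right _ _)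
    (fun j h1 h2 => hm j h1 (by omega)) hMp k hk le_rfl
  obtain ⟨hmon, hdeg⟩ := Rpoly_monic_deg m k hk
    (fun j' h1 h2 => le_trans (le_max_right _ _) (hm j' h1 (by omega)))
  obtain ⟨hPmon, hPdeg⟩ := Ppoly_monic_deg m k hk
    (fun j' h1 h2 => le_trans (le_max_right _ _) (hm j' h1 h2))
  obtain ⟨ρ, hρ1, hρδ, hρ0, hPos, hNeg⟩ := hKT.rt
  have hρpos : (0:ℝ) < ρ := by linarith
  have hsgk : ((-1:ℝ))^(k+1) = -((-1:ℝ)^k) := by rw [pow_succ]; ring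
  -- value of P at ρ is negative
  have hPρ : aeval ρ (Ppoly m k) < 0 := by
    have hv : aeval ρ (Ppoly m k)
        = (-1:ℝ)^(k+1) * (ρ^(Dd m k) * aeval ρ⁻¹ (Rpoly m k)) := by
      rw [aeval_Ppoly, hρ0, aeval_reverse_eq _ (ne_of_gt hρpos), hdeg]
      ring
    have hNegρ := hNeg ρ le_rfl hρδ.le
    rw [hv, hsgk]
    have e : -(-1:ℝ)^k * (ρ^(Dd m k) * aeval ρ⁻¹ (Rpoly m k))
        = -(ρ^(Dd m k) * ((-1:ℝ)^k * aeval ρ⁻¹ (Rpoly m k))) := by ring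
    rw [e]
    have : 0 < ρ^(Dd m k) * ((-1:ℝ)^k * aeval ρ⁻¹ (Rpoly m k)) :=
      mul_pos (by positivity) hNegρ
    linarith
  -- value of P at 1+δ is positive
  have hMle : M ≤ m (k+1) := hm (k+1) (by omega) (by omega)
  have hgk : (4:ℝ)^k < γ^k * (1+δ)^M := by
    have h2 := hMp k le_rfl
    have h5 : (0:ℝ) < (1+δ)^M := pow_pos (by linarith) M
    have h7 : γ^(k+1) ≤ γ^k := pow_le_pow_of_le_one hγpos.le hγ1.le (by omega)
    have h8 := mul_le_mul_of_nonneg_right h7 h5.le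
    have h9 : (0:ℝ) < 4^k := by positivity
    linarith
  have hPb : 0 < aeval (1+δ:ℝ) (Ppoly m k) := by
    rw [aeval_Ppoly]
    have hu := hKT.posAt
    have hv := rev_bound_real hmon hdeg hKT.small (1+δ) (by linarith)
    set v := aeval (1+δ:ℝ) (Rpoly m k).reverse with hvdef
    set u := aeval (1+δ:ℝ) (Rpoly m k) with hudef
    have habsv : |(-1:ℝ)^(k+1) * v| = |v| := by
      rw [abs_mul, abs_pow, abs_neg, abs_one, one_pow, one_mul]
    have hterm2 : -|v| ≤ (-1:ℝ)^(k+1) * v := by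
      have := neg_abs_le ((-1:ℝ)^(k+1) * v)
      rw [habsv] at this
      exact this
    have hA : (1+δ)^M * (γ^k * (1+δ)^(Dd m k)) ≤ (1+δ)^(m (k+1)) * u := by
      have h1 : ((1:ℝ)+δ)^M ≤ (1+δ)^(m (k+1)) := pow_le_pow_right₀ (by linarith) hMle
      have h2 : (0:ℝ) < γ^k * (1+δ)^(Dd m k) := by positivity
      exact mul_le_mul h1 hu h2.le (by positivity)
    have hB : |v| ≤ 4^k * (1+δ)^(Dd m k) := hv
    have hC : 4^k * (1+δ)^(Dd m k) < (1+δ)^M * (γ^k * (1+δ)^(Dd m k)) := by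
      have h5 : (0:ℝ) < (1+δ)^(Dd m k) := pow_pos (by linarith) _
      calc 4^k * (1+δ)^(Dd m k) < (γ^k * (1+δ)^M) * (1+δ)^(Dd m k) :=
            mul_lt_mul_of_pos_right hgk h5
        _ = (1+δ)^M * (γ^k * (1+δ)^(Dd m k)) := by ring
    linarith
  -- a real root above 1
  obtain ⟨τ, hτρ, hτδ, hτ0, _⟩ := root_machine hρδ.le hPρ hPb
  have hτ1 : (1:ℝ) < τ := by linarith
  -- no complex roots of modulus ≥ 1 + δ
  have hub : ∀ z : ℂ, aeval z (Ppoly m k) = 0 → Complex.abs z < 1 + δ := by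
    intro z hz
    by_contra hcon
    push_neg at hcon
    set r := Complex.abs z with hr
    have hr1 : (1:ℝ) ≤ r := by linarith
    have hlow := hKT.lower z hcon
    have hrev := rev_bound_big hmon hdeg hKT.small z hr1
    have habs1 : Complex.abs ((-1:ℂ)^(k+1)) = 1 := by
      rw [map_pow, AbsoluteValue.map_neg, map_one, one_pow]
    have hadd := abs_add_lower (z ^ (m (k+1)) * aeval z (Rpoly m k))
      ((-1:ℂ)^(k+1) * aeval z (Rpoly m k).reverse)
    have e1 : Complex.abs (z ^ (m (k+1)) * aeval z (Rpoly m k))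
        = r ^ (m (k+1)) * Complex.abs (aeval z (Rpoly m k)) := by
      rw [map_mul, map_pow]
    have e2 : Complex.abs ((-1:ℂ)^(k+1) * aeval z (Rpoly m k).reverse)
        = Complex.abs (aeval z (Rpoly m k).reverse) := by
      rw [map_mul, habs1, one_mul]
    have hA' : (1+δ)^M * (γ^k * r^(Dd m k)) ≤ r ^ (m (k+1)) * Complex.abs (aeval z (Rpoly m k)) := by
      have h1 : ((1:ℝ)+δ)^M ≤ r^(m (k+1)) := pow_ge_lemma hδ hMle hcon
      have h2 : (0:ℝ) < γ^k * r^(Dd m k) := by positivity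
      exact mul_le_mul h1 (hlow) h2.le (by positivity)
    have hC' : 4^k * r^(Dd m k) < (1+δ)^M * (γ^k * r^(Dd m k)) := by
      have h5 : (0:ℝ) < r^(Dd m k) := pow_pos (by linarith) _
      calc 4^k * r^(Dd m k) < (γ^k * (1+δ)^M) * r^(Dd m k) :=
            mul_lt_mul_of_pos_right hgk h5
        _ = (1+δ)^M * (γ^k * r^(Dd m k)) := by ring
    have hzero : Complex.abs (z ^ (m (k+1)) * aeval z (Rpoly m k)
        + (-1:ℂ)^(k+1) * aeval z (Rpoly m k).reverse) = 0 := by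
      rw [← aeval_Ppoly, hz, map_zero]
    rw [hzero, e1, e2] at hadd
    linarith [hrev, hA', hC', hadd]
  -- assemble the sSup facts
  have hPne : Ppoly m k ≠ 0 := hPmon.ne_zero
  have hroots_fin : {z : ℂ | aeval z (Ppoly m k) = 0}.Finite := by
    have hq : (Ppoly m k).map (algebraMap ℤ ℂ) ≠ 0 := by
      exact (Polynomial.map_ne_zero_iff (f := algebraMap ℤ ℂ) Int.cast_injective).2 hPne
    have hset : {z : ℂ | aeval z (Ppoly m k) = 0}
        = {z : ℂ | IsRoot ((Ppoly m k).map (algebraMap ℤ ℂ)) z} := by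
      ext z
      simp [aeval_def, IsRoot, Polynomial.eval_map]
    rw [hset]
    exact Polynomial.finite_setOf_isRoot hq
  have hSfin : (Complex.abs '' {z : ℂ | aeval z (Ppoly m k) = 0}).Finite :=
    hroots_fin.image _
  have hSbdd : BddAbove (Complex.abs '' {z : ℂ | aeval z (Ppoly m k) = 0}) :=
    hSfin.bddAbove
  have hzτ : ((τ:ℂ)) ∈ {z : ℂ | aeval z (Ppoly m k) = 0} := by
    rw [Set.mem_setOf_eq, aeval_intCast_ofReal, hτ0, Complex.ofReal_zero]
  have hτS : τ ∈ Complex.abs '' {z : ℂ | aeval z (Ppoly m k) = 0} :=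
    ⟨(τ:ℂ), hzτ, by rw [Complex.abs_ofReal, abs_of_pos (by linarith)]⟩
  constructor
  · exact lt_of_lt_of_le hτ1 (le_csSup hSbdd hτS)
  · have hle : maxRootAbs (Ppoly m k) ≤ 1 + δ := by
      refine csSup_le ⟨τ, hτS⟩ ?_
      rintro x ⟨z, hz, rfl⟩
      exact (hub z hz).le
    have : δ < ε := by rw [hδdef]; linarith
    calc maxRootAbs (Ppoly m k) ≤ 1 + δ := hle
      _ < 1 + ε := by linarith

end Final
end Base
end

section
/- Fix an integer k ≥ 1, an index i with 2 ≤ i ≤ k+1, and integers m_1, …, m_{i−1} ≥ 1. Then λ(R_{(m_1,…,m_{i−1})}) > 1, and for every ε > 0 there exists an integer M ≥ 1 such that for all integers m_i, …, m_{k+1} ≥ M, one has |λ(P_{(m_1,…,m_{k+1})}) − λ(R_{(m_1,…,m_{i−1})})| < ε. In other words, λ(P_{(m_1,…,m_{k+1})}) → λ(R_{(m_1,…,m_{i−1})}) > 1 as m_i, …, m_{k+1} all tend to ∞. -/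
open Polynomial

namespace KT

noncomputable def Complex.abs : AbsoluteValue ℂ ℝ :=
  IsAbsoluteValue.toAbsoluteValue (norm : ℂ → ℝ)

lemma Complex.norm_eq_abs (z : ℂ) : ‖z‖ = Complex.abs z := rfl

lemma Complex.abs_ofReal (r : ℝ) : Complex.abs (r : ℂ) = |r| := Complex.norm_real r

/-- The complexification of an integer polynomial. -/
noncomputable def cpx (f : Polynomial ℤ) : Polynomial ℂ := f.map (Int.castRingHom ℂ)

lemma aeval_eq_eval_cpx (f : Polynomial ℤ) (z : ℂ) : aeval z f = (cpx f).eval z := by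
  rw [cpx, aeval_def, eval_map]
  rfl

lemma cpx_ne_zero {f : Polynomial ℤ} (hf : f ≠ 0) : cpx f ≠ 0 := by
  simpa [cpx, Polynomial.map_eq_zero_iff (f := Int.castRingHom ℂ)
    (by exact fun a b h => Int.cast_injective h)] using hf

lemma Monic.cpx {f : Polynomial ℤ} (hf : f.Monic) : (cpx f).Monic :=
  hf.map _

lemma natDegree_cpx (f : Polynomial ℤ) : (cpx f).natDegree = f.natDegree :=
  natDegree_map_eq_of_injective (fun a b h => Int.cast_injective h) f

lemma roots_card {q : Polynomial ℂ} (hq : q.Monic) : q.roots.card = q.natDegree :=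
  splits_iff_card_roots.mp (IsAlgClosed.splits q)

lemma eval_eq_prod_roots {q : Polynomial ℂ} (hq : q.Monic) (z : ℂ) :
    q.eval z = (q.roots.map (fun a => z - a)).prod := by
  conv_lhs => rw [(IsAlgClosed.splits q).eq_prod_roots_of_monic hq]
  rw [eval_multiset_prod, Multiset.map_map]
  simp

lemma abs_eval_eq_prod_roots {q : Polynomial ℂ} (hq : q.Monic) (z : ℂ) :
    Complex.abs (q.eval z) = (q.roots.map (fun a => Complex.abs (z - a))).prod := by
  rw [eval_eq_prod_roots hq, map_multiset_prod, Multiset.map_map]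
  rfl

/-- The set of complex roots of an integer polynomial. -/
def rootsSet (f : Polynomial ℤ) : Set ℂ := {z : ℂ | Polynomial.aeval z f = 0}

lemma rootsSet_finite {f : Polynomial ℤ} (hf : f ≠ 0) : (rootsSet f).Finite := by
  have h : rootsSet f = {z : ℂ | (cpx f).IsRoot z} := by
    ext z; simp [rootsSet, aeval_eq_eval_cpx, IsRoot]
  rw [h]
  exact Polynomial.finite_setOf_isRoot (cpx_ne_zero hf)

lemma maxRootAbs_def (f : Polynomial ℤ) :
    maxRootAbs f = sSup (Complex.abs '' rootsSet f) := rfl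

lemma bddAbove_abs_rootsSet {f : Polynomial ℤ} (hf : f ≠ 0) :
    BddAbove (Complex.abs '' rootsSet f) :=
  ((rootsSet_finite hf).image _).bddAbove

lemma abs_le_maxRootAbs {f : Polynomial ℤ} (hf : f ≠ 0) {z : ℂ} (hz : aeval z f = 0) :
    Complex.abs z ≤ maxRootAbs f :=
  le_csSup (bddAbove_abs_rootsSet hf) ⟨z, hz, rfl⟩

lemma maxRootAbs_le {f : Polynomial ℤ} {B : ℝ} (hB : 0 ≤ B)
    (h : ∀ z : ℂ, aeval z f = 0 → Complex.abs z ≤ B) : maxRootAbs f ≤ B := by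
  rcases Set.eq_empty_or_nonempty (Complex.abs '' rootsSet f) with he | hne
  · rw [maxRootAbs_def, he, Real.sSup_empty]; exact hB
  · exact csSup_le hne (by rintro b ⟨z, hz, rfl⟩; exact h z hz)

lemma exists_root_abs_eq_maxRootAbs {f : Polynomial ℤ} (hf : f ≠ 0)
    (hne : ∃ z : ℂ, aeval z f = 0) :
    ∃ z : ℂ, aeval z f = 0 ∧ Complex.abs z = maxRootAbs f := by
  obtain ⟨z₀, hz₀⟩ := hne
  have hfin : (Complex.abs '' rootsSet f).Finite := (rootsSet_finite hf).image _
  have hne' : (Complex.abs '' rootsSet f).Nonempty := ⟨_, ⟨z₀, hz₀, rfl⟩⟩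
  have := hne'.csSup_mem hfin
  rw [← maxRootAbs_def] at this
  obtain ⟨z, hz, hz'⟩ := this
  exact ⟨z, hz, hz'⟩

/-! ### ℓ¹-norm of coefficients -/

/-- Sum of the absolute values of the coefficients. -/
noncomputable def snorm (f : Polynomial ℂ) : ℝ := ∑ n ∈ f.support, ‖f.coeff n‖

lemma snorm_nonneg (f : Polynomial ℂ) : 0 ≤ snorm f :=
  Finset.sum_nonneg fun _ _ => norm_nonneg _

lemma sum_support_le_snorm {f : Polynomial ℂ} {s : Finset ℕ} (hs : f.support ⊆ s) :
    ∑ n ∈ s, ‖f.coeff n‖ = snorm f := by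
  refine (Finset.sum_subset hs fun n _ hn => ?_).symm
  simp [Polynomial.notMem_support_iff.mp hn]

lemma snorm_add_le (f g : Polynomial ℂ) : snorm (f + g) ≤ snorm f + snorm g := by
  calc snorm (f + g) = ∑ n ∈ f.support ∪ g.support, ‖(f + g).coeff n‖ :=
        (sum_support_le_snorm (Polynomial.support_add)).symm
    _ ≤ ∑ n ∈ f.support ∪ g.support, (‖f.coeff n‖ + ‖g.coeff n‖) := by
        refine Finset.sum_le_sum fun n _ => ?_
        simpa [coeff_add] using norm_add_le (f.coeff n) (g.coeff n)
    _ = _ := by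
        rw [Finset.sum_add_distrib,
          sum_support_le_snorm (Finset.subset_union_left),
          sum_support_le_snorm (Finset.subset_union_right)]

lemma snorm_C_mul_le (c : ℂ) (f : Polynomial ℂ) : snorm (C c * f) ≤ ‖c‖ * snorm f := by
  calc snorm (C c * f) = ∑ n ∈ f.support, ‖(C c * f).coeff n‖ :=
        (sum_support_le_snorm (fun n hn => by
          rw [Polynomial.mem_support_iff, coeff_C_mul] at hn
          exact Polynomial.mem_support_iff.mpr (right_ne_zero_of_mul hn))).symm
    _ ≤ ‖c‖ * snorm f := by
        rw [snorm, Finset.mul_sum]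
        refine Finset.sum_le_sum fun n _ => ?_
        simp [coeff_C_mul, norm_mul]

lemma snorm_X_pow_mul (a : ℕ) (f : Polynomial ℂ) : snorm (X ^ a * f) = snorm f := by
  rw [mul_comm]
  unfold snorm
  refine Finset.sum_nbij' (fun n => n - a) (fun n => n + a) ?_ ?_ ?_ ?_ ?_
  · intro n hn
    rw [Polynomial.mem_support_iff, coeff_mul_X_pow'] at hn
    by_cases h : a ≤ n
    · rw [Polynomial.mem_support_iff]; simpa [h] using hn
    · simp [h] at hn
  · intro n hn
    rw [Polynomial.mem_support_iff] at hn
    rw [Polynomial.mem_support_iff]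
    simpa [coeff_mul_X_pow] using hn
  · intro n hn
    rw [Polynomial.mem_support_iff, coeff_mul_X_pow'] at hn
    by_cases h : a ≤ n
    · show n - a + a = n; omega
    · simp [h] at hn
  · intro n _
    show n + a - a = n; omega
  · intro n hn
    rw [Polynomial.mem_support_iff, coeff_mul_X_pow'] at hn
    by_cases h : a ≤ n
    · show ‖(f * X ^ a).coeff n‖ = _
      rw [coeff_mul_X_pow']; simp [h]
    · simp [h] at hn

lemma snorm_reverse_le (f : Polynomial ℂ) : snorm f.reverse ≤ snorm f := by
  unfold snorm
  calc ∑ n ∈ f.reverse.support, ‖f.reverse.coeff n‖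
      = ∑ n ∈ f.reverse.support, ‖f.coeff (revAt f.natDegree n)‖ := by
        refine Finset.sum_congr rfl fun n _ => by rw [coeff_reverse]
    _ = ∑ t ∈ f.reverse.support.map (revAt f.natDegree), ‖f.coeff t‖ := by
        rw [Finset.sum_map]
    _ ≤ ∑ n ∈ f.support, ‖f.coeff n‖ := by
        refine Finset.sum_le_sum_of_subset_of_nonneg ?_ (fun n _ _ => norm_nonneg _)
        intro t ht
        rw [Finset.mem_map] at ht
        obtain ⟨n, hn, rfl⟩ := ht
        rw [Polynomial.mem_support_iff, coeff_reverse] at hn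
        exact Polynomial.mem_support_iff.mpr hn

lemma norm_eval_le_snorm {z : ℂ} (hz : 1 ≤ ‖z‖) (f : Polynomial ℂ) :
    ‖f.eval z‖ ≤ snorm f * ‖z‖ ^ f.natDegree := by
  rw [Polynomial.eval_eq_sum, Polynomial.sum_def]
  calc ‖∑ n ∈ f.support, f.coeff n * z ^ n‖ ≤ ∑ n ∈ f.support, ‖f.coeff n * z ^ n‖ :=
        norm_sum_le _ _
    _ ≤ ∑ n ∈ f.support, ‖f.coeff n‖ * ‖z‖ ^ f.natDegree := by
        refine Finset.sum_le_sum fun n hn => ?_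
        rw [norm_mul, norm_pow]
        exact mul_le_mul_of_nonneg_left
          (pow_le_pow_right₀ hz (Polynomial.le_natDegree_of_mem_supp n hn)) (norm_nonneg _)
    _ = snorm f * ‖z‖ ^ f.natDegree := by rw [← Finset.sum_mul]; rfl

/-! ### Structure of the Kin–Takasawa polynomials -/

lemma coeff_X_pow_mul' (a n : ℕ) (q : Polynomial ℤ) :
    (X ^ a * q).coeff n = if a ≤ n then q.coeff (n - a) else 0 := by
  rw [mul_comm, coeff_mul_X_pow']

lemma Rpoly_one (m : ℕ → ℕ) : Rpoly m 1 = X ^ (m 1 + 1) * (X - 1) - 2 * X := rfl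

lemma Rpoly_succ (m : ℕ → ℕ) {j : ℕ} (hj : 1 ≤ j) :
    Rpoly m (j + 1) = X ^ (m (j + 1)) * (X - 1) * Rpoly m j
      + (-1 : Polynomial ℤ) ^ (j + 1) * (2 * X) * (Rpoly m j).reverse := by
  obtain ⟨t, rfl⟩ : ∃ t, j = t + 1 := ⟨j - 1, by omega⟩
  rfl

lemma Rpoly_congr (m₁ m₂ : ℕ → ℕ) : ∀ j : ℕ, (∀ t, 1 ≤ t → t ≤ j → m₁ t = m₂ t) →
    Rpoly m₁ j = Rpoly m₂ j
  | 0, _ => rfl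
  | 1, h => by rw [Rpoly_one, Rpoly_one, h 1 le_rfl le_rfl]
  | (i + 2), h => by
      rw [Rpoly_succ m₁ (by omega : 1 ≤ i + 1), Rpoly_succ m₂ (by omega : 1 ≤ i + 1),
        Rpoly_congr m₁ m₂ (i + 1) (fun t ht ht' => h t ht (by omega)), h (i + 2) (by omega) le_rfl]

lemma monic_X_sub_one : (X - 1 : Polynomial ℤ).Monic := by
  simpa using monic_X_sub_C (1 : ℤ)

lemma natDegree_X_sub_one : (X - 1 : Polynomial ℤ).natDegree = 1 := by
  simpa using natDegree_X_sub_C (1 : ℤ)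

lemma natDegree_two_mul_X_le : (2 * X : Polynomial ℤ).natDegree ≤ 1 := by
  calc (2 * X : Polynomial ℤ).natDegree ≤ (2 : Polynomial ℤ).natDegree + X.natDegree :=
        natDegree_mul_le
    _ ≤ 1 := by simp

/-- Monicity and degree of `Rpoly`. -/
lemma monic_Rpoly (m : ℕ → ℕ) : ∀ j : ℕ, 1 ≤ j → (∀ t, 1 ≤ t → t ≤ j → 1 ≤ m t) →
    (Rpoly m j).Monic ∧
      (Rpoly m j).natDegree = (∑ t ∈ Finset.Icc 1 j, (m t + 1)) + 1 := by
  intro j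
  induction j with
  | zero => omega
  | succ n ih =>
    intro _ hm
    rcases Nat.eq_zero_or_pos n with rfl | hn
    · -- base case j = 1
      have h1 : (X ^ (m 1 + 1) * (X - 1) : Polynomial ℤ).Monic :=
        (monic_X_pow _).mul monic_X_sub_one
      have hd1 : (X ^ (m 1 + 1) * (X - 1) : Polynomial ℤ).natDegree = m 1 + 2 := by
        rw [(monic_X_pow _).natDegree_mul monic_X_sub_one, natDegree_X_pow,
          natDegree_X_sub_one]
      have hlt : (2 * X : Polynomial ℤ).natDegree < (X ^ (m 1 + 1) * (X - 1) : Polynomial ℤ).natDegree := by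
        rw [hd1]; exact lt_of_le_of_lt natDegree_two_mul_X_le (by omega)
      constructor
      · rw [Rpoly_one]
        refine h1.sub_of_left ?_
        exact degree_lt_degree hlt
      · rw [Rpoly_one, natDegree_sub_eq_left_of_natDegree_lt hlt, hd1]
        simp
    · -- step
      have hmn : ∀ t, 1 ≤ t → t ≤ n → 1 ≤ m t := fun t ht ht' => hm t ht (by omega)
      obtain ⟨ihm, ihd⟩ := ih hn hmn
      have ha : 1 ≤ m (n + 1) := hm (n + 1) (by omega) le_rfl
      have hA : (X ^ (m (n + 1)) * (X - 1) * Rpoly m n).Monic :=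
        ((monic_X_pow _).mul monic_X_sub_one).mul ihm
      have hdA : (X ^ (m (n + 1)) * (X - 1) * Rpoly m n).natDegree
          = m (n + 1) + 1 + (Rpoly m n).natDegree := by
        rw [((monic_X_pow _).mul monic_X_sub_one).natDegree_mul ihm,
          (monic_X_pow _).natDegree_mul monic_X_sub_one, natDegree_X_pow,
          natDegree_X_sub_one]
      have hdB : ((-1 : Polynomial ℤ) ^ (n + 1) * (2 * X) * (Rpoly m n).reverse).natDegree
          ≤ 1 + (Rpoly m n).natDegree := by
        calc ((-1 : Polynomial ℤ) ^ (n + 1) * (2 * X) * (Rpoly m n).reverse).natDegree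
            ≤ ((-1 : Polynomial ℤ) ^ (n + 1) * (2 * X)).natDegree
              + (Rpoly m n).reverse.natDegree := natDegree_mul_le
          _ ≤ (((-1 : Polynomial ℤ) ^ (n + 1)).natDegree + (2 * X).natDegree)
              + (Rpoly m n).natDegree :=
                add_le_add natDegree_mul_le (Rpoly m n).reverse_natDegree_le
          _ ≤ 1 + (Rpoly m n).natDegree := by
                have h0 : ((-1 : Polynomial ℤ) ^ (n + 1)).natDegree = 0 := by
                  simp [natDegree_pow]
                have h2 := natDegree_two_mul_X_le
                omega
      have hlt : ((-1 : Polynomial ℤ) ^ (n + 1) * (2 * X) * (Rpoly m n).reverse).natDegree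
          < (X ^ (m (n + 1)) * (X - 1) * Rpoly m n).natDegree := by
        rw [hdA]; omega
      constructor
      · rw [Rpoly_succ m hn]
        exact hA.add_of_left (degree_lt_degree hlt)
      · rw [Rpoly_succ m hn, natDegree_add_eq_left_of_natDegree_lt hlt, hdA, ihd,
          Finset.sum_Icc_succ_top (by omega : 1 ≤ n + 1)]
        omega

lemma coeff_Rpoly (m : ℕ → ℕ) : ∀ j : ℕ, 1 ≤ j → (∀ t, 1 ≤ t → t ≤ j → 1 ≤ m t) →
    (Rpoly m j).coeff 0 = 0 ∧ (Rpoly m j).coeff 1 = (-1) ^ j * 2 := by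
  intro j
  induction j with
  | zero => omega
  | succ n ih =>
    intro _ hm
    rcases Nat.eq_zero_or_pos n with rfl | hn
    · have ha : 1 ≤ m 1 := hm 1 le_rfl le_rfl
      constructor
      · rw [Rpoly_one, coeff_sub, coeff_X_pow_mul']
        simp
      · rw [Rpoly_one, coeff_sub, coeff_X_pow_mul']
        rw [if_neg (by omega)]
        simp
    · have hmn : ∀ t, 1 ≤ t → t ≤ n → 1 ≤ m t := fun t ht ht' => hm t ht (by omega)
      obtain ⟨ih0, _⟩ := ih hn hmn
      obtain ⟨ihm, _⟩ := monic_Rpoly m n hn hmn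
      have ha : 1 ≤ m (n + 1) := hm (n + 1) (by omega) le_rfl
      have hC : (-1 : Polynomial ℤ) ^ (n + 1) * (2 * X) * (Rpoly m n).reverse
          = C ((-1) ^ (n + 1) * 2) * (X * (Rpoly m n).reverse) := by
        simp only [map_mul, map_pow, map_neg, map_one, map_ofNat]
        ring
      have hrev0 : (Rpoly m n).reverse.coeff 0 = 1 := by
        rw [coeff_reverse, revAt_le (Nat.zero_le _), Nat.sub_zero]
        exact ihm.coeff_natDegree
      rw [Rpoly_succ m hn, mul_assoc, hC]
      constructor
      · rw [coeff_add, coeff_X_pow_mul', if_neg (by omega), coeff_C_mul, coeff_X_mul_zero]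
        ring
      · rw [coeff_add, coeff_X_pow_mul', coeff_C_mul,
          show (1 : ℕ) = 0 + 1 from rfl, coeff_X_mul, hrev0]
        by_cases h : m (n + 1) ≤ 0 + 1
        · rw [if_pos h, show (0 + 1 - m (n+1)) = 0 from by omega, mul_coeff_zero]
          simp [ih0]
        · rw [if_neg h]
          ring

/-! ### The complexified polynomials -/

lemma cpx_coeff (f : Polynomial ℤ) (n : ℕ) : (cpx f).coeff n = (f.coeff n : ℂ) :=
  coeff_map _ n

lemma cpx_reverse (f : Polynomial ℤ) : cpx f.reverse = (cpx f).reverse := by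
  unfold cpx
  rw [Polynomial.reverse, Polynomial.reverse, ← reflect_map,
    natDegree_map_eq_of_injective (fun a b h => Int.cast_injective h) f]

lemma cpx_Rpoly_one (m : ℕ → ℕ) :
    cpx (Rpoly m 1) = X ^ (m 1 + 1) * (X - 1) - 2 * X := by
  unfold cpx
  rw [Rpoly_one]
  simp

lemma cpx_Rpoly_succ (m : ℕ → ℕ) {j : ℕ} (hj : 1 ≤ j) :
    cpx (Rpoly m (j + 1)) = X ^ (m (j + 1)) * (X - 1) * cpx (Rpoly m j)
      + (-1 : Polynomial ℂ) ^ (j + 1) * (2 * X) * (cpx (Rpoly m j)).reverse := by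
  rw [Rpoly_succ m hj]
  unfold cpx
  rw [Polynomial.map_add, Polynomial.map_mul, Polynomial.map_mul, Polynomial.map_mul,
    Polynomial.map_mul, Polynomial.map_pow, Polynomial.map_pow, Polynomial.map_sub,
    Polynomial.map_neg, Polynomial.map_one, Polynomial.map_X, Polynomial.map_mul,
    Polynomial.map_ofNat, Polynomial.map_X]
  rw [show map (Int.castRingHom ℂ) (Rpoly m j).reverse = (map (Int.castRingHom ℂ) (Rpoly m j)).reverse
    from cpx_reverse (Rpoly m j)]

lemma cpx_Ppoly (m : ℕ → ℕ) (k : ℕ) :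
    cpx (Ppoly m k) = X ^ (m (k + 1)) * cpx (Rpoly m k)
      + (-1 : Polynomial ℂ) ^ (k + 1) * (cpx (Rpoly m k)).reverse := by
  unfold Ppoly cpx
  rw [Polynomial.map_add, Polynomial.map_mul, Polynomial.map_mul,
    Polynomial.map_pow, Polynomial.map_pow, Polynomial.map_neg, Polynomial.map_one,
    Polynomial.map_X]
  rw [show map (Int.castRingHom ℂ) (Rpoly m k).reverse = (map (Int.castRingHom ℂ) (Rpoly m k)).reverse
    from cpx_reverse (Rpoly m k)]

/-! ### ℓ¹ bounds for the complexified polynomials -/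

lemma snorm_neg (f : Polynomial ℂ) : snorm (-f) = snorm f := by
  unfold snorm
  rw [support_neg]
  exact Finset.sum_congr rfl fun n _ => by rw [coeff_neg, norm_neg]

lemma snorm_one : snorm (1 : Polynomial ℂ) = 1 := by
  unfold snorm
  rw [show (1 : Polynomial ℂ) = C 1 from (map_one C).symm, support_C one_ne_zero]
  simp

lemma snorm_X_pow (a : ℕ) : snorm (X ^ a : Polynomial ℂ) = 1 := by
  have := snorm_X_pow_mul a (1 : Polynomial ℂ)
  rw [mul_one] at this
  rw [this, snorm_one]

lemma snorm_sub_le (f g : Polynomial ℂ) : snorm (f - g) ≤ snorm f + snorm g := by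
  rw [sub_eq_add_neg]
  exact (snorm_add_le f (-g)).trans (by rw [snorm_neg])

lemma snorm_X_mul (f : Polynomial ℂ) : snorm (X * f) = snorm f := by
  have := snorm_X_pow_mul 1 f
  rwa [pow_one] at this

lemma snorm_cpx_Rpoly (m : ℕ → ℕ) : ∀ j : ℕ, 1 ≤ j →
    snorm (cpx (Rpoly m j)) ≤ 4 ^ (j + 1) := by
  intro j
  induction j with
  | zero => omega
  | succ n ih =>
    intro _
    rcases Nat.eq_zero_or_pos n with rfl | hn
    · rw [cpx_Rpoly_one]
      have h1 : (X ^ (m 1 + 1) * (X - 1) : Polynomial ℂ) = X ^ (m 1 + 1) * X - X ^ (m 1 + 1) * 1 := by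
        ring
      calc snorm (X ^ (m 1 + 1) * (X - 1) - 2 * X : Polynomial ℂ)
          ≤ snorm (X ^ (m 1 + 1) * (X - 1) : Polynomial ℂ) + snorm (2 * X : Polynomial ℂ) :=
            snorm_sub_le _ _
        _ ≤ (snorm (X ^ (m 1 + 1) * X : Polynomial ℂ) + snorm (X ^ (m 1 + 1) * 1 : Polynomial ℂ))
            + snorm (2 * X : Polynomial ℂ) := by
              rw [h1]; exact add_le_add_left (snorm_sub_le _ _) _
        _ ≤ (1 + 1) + 2 := by
            have e1 : snorm (X ^ (m 1 + 1) * X : Polynomial ℂ) = 1 := by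
              rw [snorm_X_pow_mul]
              have := snorm_X_pow (1 : ℕ)
              rwa [pow_one] at this
            have e2 : snorm (X ^ (m 1 + 1) * 1 : Polynomial ℂ) = 1 := by
              rw [snorm_X_pow_mul, snorm_one]
            have e3 : snorm (2 * X : Polynomial ℂ) ≤ 2 := by
              have h2 : (2 * X : Polynomial ℂ) = C 2 * (X * 1) := by
                rw [mul_one, map_ofNat]
              rw [h2]
              calc snorm (C 2 * (X * 1) : Polynomial ℂ) ≤ ‖(2:ℂ)‖ * snorm (X * 1 : Polynomial ℂ) :=
                    snorm_C_mul_le _ _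
                _ ≤ 2 := by rw [snorm_X_mul, snorm_one]; norm_num
            rw [e1, e2]
            exact add_le_add_right e3 _
        _ ≤ 4 ^ (0 + 1 + 1) := by norm_num
    · have hBC : (-1 : Polynomial ℂ) ^ (n + 1) * (2 * X) * (cpx (Rpoly m n)).reverse
          = C ((-1 : ℂ) ^ (n + 1) * 2) * (X * (cpx (Rpoly m n)).reverse) := by
        simp only [map_mul, map_pow, map_neg, map_one, map_ofNat]
        ring
      have hA : (X ^ (m (n + 1)) * (X - 1) * cpx (Rpoly m n) : Polynomial ℂ)
          = X ^ (m (n + 1)) * (X * cpx (Rpoly m n)) - X ^ (m (n + 1)) * cpx (Rpoly m n) := by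
        ring
      rw [cpx_Rpoly_succ m hn, hBC]
      have key : snorm (X ^ (m (n + 1)) * (X - 1) * cpx (Rpoly m n)
            + C ((-1 : ℂ) ^ (n + 1) * 2) * (X * (cpx (Rpoly m n)).reverse))
          ≤ 4 * snorm (cpx (Rpoly m n)) := by
        calc snorm (X ^ (m (n + 1)) * (X - 1) * cpx (Rpoly m n)
              + C ((-1 : ℂ) ^ (n + 1) * 2) * (X * (cpx (Rpoly m n)).reverse))
            ≤ snorm (X ^ (m (n + 1)) * (X - 1) * cpx (Rpoly m n))
              + snorm (C ((-1 : ℂ) ^ (n + 1) * 2) * (X * (cpx (Rpoly m n)).reverse)) :=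
              snorm_add_le _ _
          _ ≤ (snorm (cpx (Rpoly m n)) + snorm (cpx (Rpoly m n)))
              + 2 * snorm (cpx (Rpoly m n)) := by
              refine add_le_add ?_ ?_
              · rw [hA]
                refine (snorm_sub_le _ _).trans ?_
                rw [snorm_X_pow_mul, snorm_X_pow_mul, snorm_X_mul]
              · refine (snorm_C_mul_le _ _).trans ?_
                have hnorm : ‖(-1 : ℂ) ^ (n + 1) * 2‖ = 2 := by
                  rw [norm_mul, norm_pow, norm_neg, norm_one, one_pow, one_mul]
                  norm_num
                rw [hnorm, snorm_X_mul]
                exact mul_le_mul_of_nonneg_left (snorm_reverse_le _) (by norm_num)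
          _ = 4 * snorm (cpx (Rpoly m n)) := by ring
      refine key.trans ?_
      calc 4 * snorm (cpx (Rpoly m n)) ≤ 4 * 4 ^ (n + 1) :=
            mul_le_mul_of_nonneg_left (ih hn) (by norm_num)
        _ = 4 ^ (n + 1 + 1) := by ring

lemma snorm_cpx_Ppoly (m : ℕ → ℕ) (k : ℕ) (hk : 1 ≤ k) :
    snorm (cpx (Ppoly m k)) ≤ 2 * 4 ^ (k + 1) := by
  rw [cpx_Ppoly]
  have h1 : snorm (X ^ (m (k + 1)) * cpx (Rpoly m k)) ≤ 4 ^ (k + 1) := by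
    rw [snorm_X_pow_mul]; exact snorm_cpx_Rpoly m k hk
  have hBC : (-1 : Polynomial ℂ) ^ (k + 1) * (cpx (Rpoly m k)).reverse
      = C ((-1 : ℂ) ^ (k + 1)) * (cpx (Rpoly m k)).reverse := by
    simp only [map_pow, map_neg, map_one]
  have h2 : snorm ((-1 : Polynomial ℂ) ^ (k + 1) * (cpx (Rpoly m k)).reverse) ≤ 4 ^ (k + 1) := by
    rw [hBC]
    refine (snorm_C_mul_le _ _).trans ?_
    have : ‖(-1 : ℂ) ^ (k + 1)‖ = 1 := by
      rw [norm_pow, norm_neg, norm_one, one_pow]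
    rw [this, one_mul]
    exact (snorm_reverse_le _).trans (snorm_cpx_Rpoly m k hk)
  calc snorm _ ≤ _ + _ := snorm_add_le _ _
    _ ≤ 4 ^ (k + 1) + 4 ^ (k + 1) := add_le_add h1 h2
    _ = 2 * 4 ^ (k + 1) := by ring

/-! ### Part 1 : the largest root of `Rpoly` exceeds 1 -/

lemma multiset_prod_le_one {s : Multiset ℝ} (h0 : ∀ x ∈ s, 0 ≤ x) (h1 : ∀ x ∈ s, x ≤ 1) :
    s.prod ≤ 1 := by
  induction s using Multiset.induction with
  | empty => simp
  | cons a s ih =>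
    rw [Multiset.prod_cons]
    have ha0 := h0 a (Multiset.mem_cons_self a s)
    have ha1 := h1 a (Multiset.mem_cons_self a s)
    have hs : s.prod ≤ 1 := ih (fun x hx => h0 x (Multiset.mem_cons_of_mem hx))
      (fun x hx => h1 x (Multiset.mem_cons_of_mem hx))
    have hs0 : 0 ≤ s.prod := Multiset.prod_nonneg fun x hx => h0 x (Multiset.mem_cons_of_mem hx)
    calc a * s.prod ≤ 1 * 1 := mul_le_mul ha1 hs hs0 zero_le_one
      _ = 1 := mul_one 1

lemma exists_root_cpx {f : Polynomial ℤ} (hf : f.Monic) (hd : 1 ≤ f.natDegree) :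
    ∃ z : ℂ, aeval z f = 0 := by
  have hcard : (cpx f).roots.card = f.natDegree := by
    rw [roots_card (Monic.cpx hf), natDegree_cpx]
  have : (cpx f).roots ≠ 0 := by
    intro h
    rw [h] at hcard
    simp at hcard
    omega
  obtain ⟨z, hz⟩ := Multiset.exists_mem_of_ne_zero this
  refine ⟨z, ?_⟩
  rw [aeval_eq_eval_cpx]
  exact (Polynomial.isRoot_of_mem_roots hz)

lemma one_lt_maxRootAbs_Rpoly (m : ℕ → ℕ) (j : ℕ) (hj : 1 ≤ j)
    (hm : ∀ t, 1 ≤ t → t ≤ j → 1 ≤ m t) : 1 < maxRootAbs (Rpoly m j) := by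
  obtain ⟨hmon, _⟩ := monic_Rpoly m j hj hm
  obtain ⟨hc0, hc1⟩ := coeff_Rpoly m j hj hm
  have hfne : Rpoly m j ≠ 0 := hmon.ne_zero
  set fc : Polynomial ℂ := cpx (Rpoly m j) with hfc
  have hfcm : fc.Monic := Monic.cpx hmon
  set g : Polynomial ℂ := fc.divX with hg
  have hfg : fc = X * g := by
    have := fc.X_mul_divX_add
    rw [← hg] at this
    rw [← this, cpx_coeff, hc0]
    simp
  have hgm : g.Monic := by
    have : (X * g).Monic := by rw [← hfg]; exact hfcm
    exact (monic_X).of_mul_monic_left this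
  have hg0 : ‖g.coeff 0‖ = 2 := by
    rw [hg, coeff_divX, cpx_coeff, hc1]
    push_cast
    rw [norm_mul, norm_pow, norm_neg, norm_one, one_pow, one_mul]
    norm_num
  -- product of the absolute values of the roots of g is 2
  have hsplit := (IsAlgClosed.splits g).coeff_zero_eq_prod_roots_of_monic hgm
  have hprod : (g.roots.map Complex.abs).prod = 2 := by
    have h2 : Complex.abs (g.coeff 0) = 2 := by rw [← Complex.norm_eq_abs]; exact hg0
    rw [hsplit, map_mul, map_pow] at h2
    have h3 : Complex.abs (-1 : ℂ) = 1 := by simp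
    rw [h3, one_pow, one_mul, map_multiset_prod] at h2
    exact h2
  by_contra hle
  push_neg at hle
  have hall : ∀ x ∈ g.roots.map Complex.abs, x ≤ 1 := by
    rintro x hx
    obtain ⟨α, hα, rfl⟩ := Multiset.mem_map.mp hx
    have hroot : aeval α (Rpoly m j) = 0 := by
      rw [aeval_eq_eval_cpx, ← hfc, hfg]
      have : g.eval α = 0 := (Polynomial.isRoot_of_mem_roots hα)
      simp [this]
    exact (abs_le_maxRootAbs hfne hroot).trans hle
  have := multiset_prod_le_one (fun x hx => by
    obtain ⟨α, _, rfl⟩ := Multiset.mem_map.mp hx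
    exact AbsoluteValue.nonneg _ _) hall
  rw [hprod] at this
  norm_num at this

/-! ### Part (a) : no large roots when the inner exponents are large -/

lemma pow_card_le_multiset_prod {s : Multiset ℝ} {c : ℝ} (hc : 0 ≤ c)
    (h : ∀ x ∈ s, c ≤ x) : c ^ Multiset.card s ≤ s.prod := by
  induction s using Multiset.induction with
  | empty => simp
  | cons a s ih =>
    rw [Multiset.prod_cons, Multiset.card_cons, pow_succ']
    have ha := h a (Multiset.mem_cons_self a s)
    exact mul_le_mul ha (ih fun x hx => h x (Multiset.mem_cons_of_mem hx))
      (pow_nonneg hc _) (hc.trans ha)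

lemma eval_lower_of_roots_le {q : Polynomial ℂ} (hq : q.Monic) {L r : ℝ} (hL : 0 ≤ L)
    (hroots : ∀ α ∈ q.roots, Complex.abs α ≤ L) (hr : L < r) :
    ∀ z : ℂ, r ≤ ‖z‖ → (1 - L / r) ^ q.natDegree * ‖z‖ ^ q.natDegree ≤ ‖q.eval z‖ := by
  intro z hz
  have hr0 : 0 < r := hL.trans_lt hr
  have hz0 : 0 < ‖z‖ := hr0.trans_le hz
  have hfac : 0 ≤ (1 - L / r) * ‖z‖ := by
    have h1 : L / r < 1 := (div_lt_one hr0).mpr hr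
    have h2 : 0 ≤ 1 - L / r := by linarith
    exact mul_nonneg h2 (le_of_lt hz0)
  have hnorm : ‖q.eval z‖ = (q.roots.map (fun a => Complex.abs (z - a))).prod := by
    rw [Complex.norm_eq_abs]
    exact abs_eval_eq_prod_roots hq z
  have hcard : Multiset.card (q.roots.map (fun a => Complex.abs (z - a))) = q.natDegree := by
    rw [Multiset.card_map, roots_card hq]
  have hbound : ∀ x ∈ q.roots.map (fun a => Complex.abs (z - a)), (1 - L / r) * ‖z‖ ≤ x := by
    rintro x hx
    obtain ⟨α, hα, rfl⟩ := Multiset.mem_map.mp hx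
    have h1 : ‖z‖ - L ≤ Complex.abs (z - α) := by
      rw [← Complex.norm_eq_abs]
      calc ‖z‖ - L ≤ ‖z‖ - ‖α‖ := by
            have := hroots α hα; rw [← Complex.norm_eq_abs] at this; linarith
        _ ≤ ‖z - α‖ := norm_sub_norm_le z α
    refine le_trans ?_ h1
    have hq2 : L * 1 ≤ L * (‖z‖ / r) := mul_le_mul_of_nonneg_left ((one_le_div hr0).mpr hz) hL
    have hq3 : (1 - L / r) * ‖z‖ = ‖z‖ - L * (‖z‖ / r) := by field_simp
    rw [hq3]
    linarith
  calc (1 - L / r) ^ q.natDegree * ‖z‖ ^ q.natDegree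
      = ((1 - L / r) * ‖z‖) ^ q.natDegree := (mul_pow _ _ _).symm
    _ = ((1 - L / r) * ‖z‖) ^ Multiset.card (q.roots.map (fun a => Complex.abs (z - a))) := by
        rw [hcard]
    _ ≤ (q.roots.map (fun a => Complex.abs (z - a))).prod :=
        pow_card_le_multiset_prod hfac hbound
    _ = ‖q.eval z‖ := hnorm.symm

lemma natDegree_Rpoly_succ (m : ℕ → ℕ) {j : ℕ} (hj : 1 ≤ j)
    (hm : ∀ t, 1 ≤ t → t ≤ j + 1 → 1 ≤ m t) :
    (Rpoly m (j + 1)).natDegree = m (j + 1) + 1 + (Rpoly m j).natDegree := by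
  have h1 := (monic_Rpoly m j hj (fun t ht ht' => hm t ht (by omega))).2
  have h2 := (monic_Rpoly m (j + 1) (by omega) hm).2
  rw [h1, h2, Finset.sum_Icc_succ_top (by omega : 1 ≤ j + 1)]
  omega

lemma eval_cpx_Rpoly_succ (m : ℕ → ℕ) {j : ℕ} (hj : 1 ≤ j) (z : ℂ) :
    eval z (cpx (Rpoly m (j + 1))) = z ^ (m (j + 1)) * (z - 1) * eval z (cpx (Rpoly m j))
      + (-1 : ℂ) ^ (j + 1) * (2 * z) * eval z (cpx (Rpoly m j)).reverse := by
  rw [cpx_Rpoly_succ m hj]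
  simp

lemma eval_cpx_Ppoly (m : ℕ → ℕ) (k : ℕ) (z : ℂ) :
    eval z (cpx (Ppoly m k)) = z ^ (m (k + 1)) * eval z (cpx (Rpoly m k))
      + (-1 : ℂ) ^ (k + 1) * eval z (cpx (Rpoly m k)).reverse := by
  rw [cpx_Ppoly]
  simp

lemma norm_rev_eval_le (m : ℕ → ℕ) {j k : ℕ} (hj : 1 ≤ j) (hjk : j ≤ k) {z : ℂ}
    (hz : 1 ≤ ‖z‖) :
    ‖eval z (cpx (Rpoly m j)).reverse‖ ≤ 4 ^ (k + 1) * ‖z‖ ^ (Rpoly m j).natDegree := by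
  calc ‖eval z (cpx (Rpoly m j)).reverse‖
      ≤ snorm (cpx (Rpoly m j)).reverse * ‖z‖ ^ (cpx (Rpoly m j)).reverse.natDegree :=
        norm_eval_le_snorm hz _
    _ ≤ 4 ^ (k + 1) * ‖z‖ ^ (Rpoly m j).natDegree := by
        refine mul_le_mul ?_ ?_ (by positivity) (by positivity)
        · exact (snorm_reverse_le _).trans ((snorm_cpx_Rpoly m j hj).trans
            (pow_le_pow_right₀ (by norm_num) (by omega)))
        · refine pow_le_pow_right₀ hz ?_
          exact le_trans (cpx (Rpoly m j)).reverse_natDegree_le (le_of_eq (natDegree_cpx _))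

/-- Key induction for part (a): on the region `r ≤ ‖z‖`, the polynomials `R_j` are
bounded below by `c₀ q^(j-p) ‖z‖^(deg R_j)`. -/
lemma region_lower (m' : ℕ → ℕ) (p k : ℕ) (hp : 1 ≤ p)
    (hm' : ∀ t, 1 ≤ t → t ≤ k → 1 ≤ m' t) {r : ℝ} (hr : 1 < r)
    {c₀ : ℝ} (hc₀ : 0 < c₀)
    (hbase : ∀ z : ℂ, r ≤ ‖z‖ →
      c₀ * ‖z‖ ^ (Rpoly m' p).natDegree ≤ ‖eval z (cpx (Rpoly m' p))‖)
    (M : ℕ) (hM : ∀ t, p < t → t ≤ k → M ≤ m' t)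
    (hMbig : 2 * 4 ^ (k + 1) ≤ c₀ * ((1 - 1/r)/2) ^ k * r ^ M) :
    ∀ j (hpj : p ≤ j), j ≤ k → ∀ z : ℂ, r ≤ ‖z‖ →
      c₀ * ((1 - 1/r)/2) ^ (j - p) * ‖z‖ ^ (Rpoly m' j).natDegree
        ≤ ‖eval z (cpx (Rpoly m' j))‖ := by
  set q : ℝ := (1 - 1/r)/2 with hqdef
  have hr0 : 0 < r := lt_trans zero_lt_one hr
  have hq0 : 0 < q := by
    rw [hqdef]
    have : 1/r < 1 := by rw [div_lt_one hr0]; exact hr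
    linarith
  have hq1 : q ≤ 1 := by
    rw [hqdef]
    have : 0 < 1/r := by positivity
    linarith
  intro j hpj
  induction j, hpj using Nat.le_induction with
  | base =>
    intro _ z hz
    simpa using hbase z hz
  | succ n hn ih =>
    intro hk1 z hz
    have hnk : n ≤ k := by omega
    have h1n : 1 ≤ n := le_trans hp hn
    have hy1 : 1 ≤ ‖z‖ := le_of_lt (lt_of_lt_of_le hr hz)
    have hy0 : 0 < ‖z‖ := lt_of_lt_of_le hr0 hz
    set y : ℝ := ‖z‖ with hydef
    have ihz := ih hnk z hz
    set d : ℕ := (Rpoly m' n).natDegree with hddef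
    set a : ℕ := m' (n + 1) with hadef
    have hdsucc : (Rpoly m' (n + 1)).natDegree = a + 1 + d :=
      natDegree_Rpoly_succ m' h1n (fun t ht ht' => hm' t ht (by omega))
    have haM : M ≤ a := hM (n + 1) (by omega) (by omega)
    -- norms of the two summands
    have hrev : ‖eval z (cpx (Rpoly m' n)).reverse‖ ≤ 4 ^ (k + 1) * y ^ d :=
      norm_rev_eval_le m' h1n hnk hy1
    have hz1 : y - 1 ≤ ‖z - 1‖ := by
      calc y - 1 = ‖z‖ - ‖(1:ℂ)‖ := by rw [norm_one]
        _ ≤ ‖z - 1‖ := norm_sub_norm_le z 1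
    have hmain : y ^ a * (y - 1) * (c₀ * q ^ (n - p) * y ^ d)
        ≤ ‖z ^ a * (z - 1) * eval z (cpx (Rpoly m' n))‖ := by
      rw [norm_mul, norm_mul, norm_pow]
      have h1 : (0:ℝ) ≤ y ^ a := by positivity
      have h2 : 0 ≤ y - 1 := by linarith
      refine mul_le_mul (mul_le_mul le_rfl hz1 h2 h1) ihz (by positivity) (by positivity)
    have hB : ‖(-1 : ℂ) ^ (n + 1) * (2 * z) * eval z (cpx (Rpoly m' n)).reverse‖
        ≤ 2 * y * (4 ^ (k + 1) * y ^ d) := by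
      rw [norm_mul, norm_mul, norm_pow, norm_neg, norm_one, one_pow, one_mul, norm_mul]
      have : ‖(2:ℂ)‖ = 2 := by norm_num
      rw [this]
      exact mul_le_mul_of_nonneg_left hrev (by positivity)
    -- the triangle inequality
    have htri : ‖z ^ a * (z - 1) * eval z (cpx (Rpoly m' n))‖
        - ‖(-1 : ℂ) ^ (n + 1) * (2 * z) * eval z (cpx (Rpoly m' n)).reverse‖
        ≤ ‖eval z (cpx (Rpoly m' (n + 1)))‖ := by
      rw [eval_cpx_Rpoly_succ m' h1n z]
      set A := z ^ a * (z - 1) * eval z (cpx (Rpoly m' n))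
      set B := (-1 : ℂ) ^ (n + 1) * (2 * z) * eval z (cpx (Rpoly m' n)).reverse
      calc ‖A‖ - ‖B‖ = ‖A‖ - ‖-B‖ := by rw [norm_neg]
        _ ≤ ‖A - -B‖ := norm_sub_norm_le A (-B)
        _ = ‖A + B‖ := by rw [sub_neg_eq_add]
    -- arithmetic
    have key1 : 2 * 4 ^ (k + 1) ≤ c₀ * q ^ (n + 1 - p) * y ^ a := by
      refine hMbig.trans ?_
      have e1 : q ^ k ≤ q ^ (n + 1 - p) := pow_le_pow_of_le_one (le_of_lt hq0) hq1 (by omega)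
      have e2 : r ^ M ≤ y ^ a := by
        calc r ^ M ≤ y ^ M := pow_le_pow_left₀ (le_of_lt hr0) hz M
          _ ≤ y ^ a := pow_le_pow_right₀ hy1 haM
      have h1 : 0 ≤ c₀ * q ^ (n+1-p) := by positivity
      have h2 : 0 ≤ r ^ M := by positivity
      calc c₀ * q ^ k * r ^ M ≤ c₀ * q ^ (n + 1 - p) * r ^ M :=
            mul_le_mul_of_nonneg_right (mul_le_mul_of_nonneg_left e1 (le_of_lt hc₀)) h2
        _ ≤ c₀ * q ^ (n + 1 - p) * y ^ a := mul_le_mul_of_nonneg_left e2 h1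
    have key2 : 2 * q * y ≤ y - 1 := by
      have : 1 ≤ y / r := (one_le_div hr0).mpr (hz.trans (le_of_eq rfl))
      have h2 : 2 * q * y = y - y / r := by rw [hqdef]; field_simp
      rw [h2]
      linarith
    have hqsplit : q ^ (n + 1 - p) = q * q ^ (n - p) := by
      rw [← pow_succ']
      congr 1
      omega
    -- conclude
    rw [hdsucc]
    refine le_trans ?_ htri
    have hyad : y ^ (a + 1 + d) = y ^ a * y * y ^ d := by
      rw [pow_add, pow_add, pow_one]
    have hstep : c₀ * q ^ (n + 1 - p) * y ^ (a + 1 + d) + 2 * y * (4 ^ (k + 1) * y ^ d)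
        ≤ y ^ a * (y - 1) * (c₀ * q ^ (n - p) * y ^ d) := by
      have h3 : c₀ * q ^ (n + 1 - p) * y ^ (a + 1 + d) + 2 * y * (4 ^ (k + 1) * y ^ d)
          ≤ 2 * (c₀ * q ^ (n + 1 - p) * y ^ a) * (y * y ^ d) := by
        have hyyd : (0:ℝ) ≤ y * y ^ d := by positivity
        have := mul_le_mul_of_nonneg_right key1 hyyd
        rw [hyad]
        nlinarith
      refine h3.trans ?_
      have h4 : 2 * (c₀ * q ^ (n + 1 - p) * y ^ a) * (y * y ^ d)
          = (2 * q * y) * (c₀ * q ^ (n - p) * y ^ a * y ^ d) := by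
        rw [hqsplit]; ring
      have h5 : y ^ a * (y - 1) * (c₀ * q ^ (n - p) * y ^ d)
          = (y - 1) * (c₀ * q ^ (n - p) * y ^ a * y ^ d) := by ring
      rw [h4, h5]
      exact mul_le_mul_of_nonneg_right key2 (by positivity)
    linarith [hmain, hB, hstep]
lemma Ppoly_no_big_roots (m' : ℕ → ℕ) (p k : ℕ) (hp : 1 ≤ p) (hpk : p ≤ k)
    (hm' : ∀ t, 1 ≤ t → t ≤ k → 1 ≤ m' t) {r : ℝ} (hr : 1 < r)
    {c₀ : ℝ} (hc₀ : 0 < c₀)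
    (hbase : ∀ z : ℂ, r ≤ ‖z‖ →
      c₀ * ‖z‖ ^ (Rpoly m' p).natDegree ≤ ‖eval z (cpx (Rpoly m' p))‖)
    (M : ℕ) (hM : ∀ t, p < t → t ≤ k + 1 → M ≤ m' t)
    (hMbig : 2 * 4 ^ (k + 1) ≤ c₀ * ((1 - 1/r)/2) ^ k * r ^ M) :
    ∀ z : ℂ, r ≤ ‖z‖ → eval z (cpx (Ppoly m' k)) ≠ 0 := by
  set q : ℝ := (1 - 1/r)/2 with hqdef
  have hr0 : 0 < r := lt_trans zero_lt_one hr
  have hq0 : 0 < q := by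
    rw [hqdef]
    have : 1/r < 1 := by rw [div_lt_one hr0]; exact hr
    linarith
  have hq1 : q ≤ 1 := by
    rw [hqdef]
    have : 0 < 1/r := by positivity
    linarith
  intro z hz hzero
  have hy1 : 1 ≤ ‖z‖ := le_of_lt (lt_of_lt_of_le hr hz)
  have hy0 : 0 < ‖z‖ := lt_of_lt_of_le hr0 hz
  set y : ℝ := ‖z‖ with hydef
  set d : ℕ := (Rpoly m' k).natDegree with hddef
  set a : ℕ := m' (k + 1) with hadef
  have hlow := region_lower m' p k hp hm' hr hc₀ hbase M
    (fun t ht ht' => hM t ht (by omega)) hMbig k hpk le_rfl z hz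
  have hrev : ‖eval z (cpx (Rpoly m' k)).reverse‖ ≤ 4 ^ (k + 1) * y ^ d :=
    norm_rev_eval_le m' (le_trans hp hpk) le_rfl hy1
  have hAB : z ^ a * eval z (cpx (Rpoly m' k))
      = -((-1 : ℂ) ^ (k + 1) * eval z (cpx (Rpoly m' k)).reverse) := by
    have := eval_cpx_Ppoly m' k z
    rw [hzero] at this
    linear_combination -this
  have hnormA : ‖z ^ a * eval z (cpx (Rpoly m' k))‖ = y ^ a * ‖eval z (cpx (Rpoly m' k))‖ := by
    rw [norm_mul, norm_pow]
  have hnormB : ‖(-1 : ℂ) ^ (k + 1) * eval z (cpx (Rpoly m' k)).reverse‖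
      = ‖eval z (cpx (Rpoly m' k)).reverse‖ := by
    rw [norm_mul, norm_pow, norm_neg, norm_one, one_pow, one_mul]
  have heq : y ^ a * ‖eval z (cpx (Rpoly m' k))‖ = ‖eval z (cpx (Rpoly m' k)).reverse‖ := by
    rw [← hnormA, ← hnormB, hAB, norm_neg]
  -- lower bound for LHS
  have h1 : c₀ * q ^ (k - p) * y ^ d * y ^ a ≤ y ^ a * ‖eval z (cpx (Rpoly m' k))‖ := by
    rw [mul_comm (y ^ a) _]
    exact mul_le_mul_of_nonneg_right hlow (by positivity)
  have key1 : 2 * 4 ^ (k + 1) ≤ c₀ * q ^ (k - p) * y ^ a := by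
    refine hMbig.trans ?_
    have e1 : q ^ k ≤ q ^ (k - p) := pow_le_pow_of_le_one (le_of_lt hq0) hq1 (by omega)
    have e2 : r ^ M ≤ y ^ a := by
      calc r ^ M ≤ y ^ M := pow_le_pow_left₀ (le_of_lt hr0) hz M
        _ ≤ y ^ a := pow_le_pow_right₀ hy1 (hM (k+1) (by omega) le_rfl)
    calc c₀ * q ^ k * r ^ M ≤ c₀ * q ^ (k - p) * r ^ M :=
          mul_le_mul_of_nonneg_right (mul_le_mul_of_nonneg_left e1 (le_of_lt hc₀)) (by positivity)
      _ ≤ c₀ * q ^ (k - p) * y ^ a :=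
          mul_le_mul_of_nonneg_left e2 (by positivity)
  have hyd : (0:ℝ) < y ^ d := by positivity
  have hcontr : 2 * 4 ^ (k + 1) * y ^ d ≤ 4 ^ (k + 1) * y ^ d := by
    calc 2 * 4 ^ (k + 1) * y ^ d ≤ (c₀ * q ^ (k - p) * y ^ a) * y ^ d :=
          mul_le_mul_of_nonneg_right key1 (le_of_lt hyd)
      _ = c₀ * q ^ (k - p) * y ^ d * y ^ a := by ring
      _ ≤ y ^ a * ‖eval z (cpx (Rpoly m' k))‖ := h1
      _ = ‖eval z (cpx (Rpoly m' k)).reverse‖ := heq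
      _ ≤ 4 ^ (k + 1) * y ^ d := hrev
  have h4pos : (0:ℝ) < 4 ^ (k + 1) := by positivity
  nlinarith [mul_pos h4pos hyd]

/-- Part (a) packaged: all roots of `Ppoly m' k` have absolute value at most `r`. -/
lemma part_a (m : ℕ → ℕ) (p k : ℕ) (hp : 1 ≤ p) (hpk : p ≤ k)
    (hm : ∀ t, 1 ≤ t → t ≤ p → 1 ≤ m t) {r : ℝ}
    (hlr : maxRootAbs (Rpoly m p) < r) (hr : 1 < r) :
    ∃ M : ℕ, 1 ≤ M ∧ ∀ m' : ℕ → ℕ, (∀ t, 1 ≤ t → t ≤ p → m' t = m t) →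
      (∀ t, p < t → t ≤ k + 1 → M ≤ m' t) →
      maxRootAbs (Ppoly m' k) ≤ r := by
  have hr0 : 0 < r := lt_trans zero_lt_one hr
  set q : ℝ := (1 - 1/r)/2 with hqdef
  have hq0 : 0 < q := by
    rw [hqdef]
    have : 1/r < 1 := by rw [div_lt_one hr0]; exact hr
    linarith
  set lam : ℝ := maxRootAbs (Rpoly m p) with hlam
  have hlam1 : 1 < lam := one_lt_maxRootAbs_Rpoly m p hp hm
  have hlam0 : 0 ≤ lam := by linarith
  set dp : ℕ := (Rpoly m p).natDegree with hdp
  set c₀ : ℝ := (1 - lam / r) ^ dp with hc₀def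
  have hc₀ : 0 < c₀ := by
    have : lam / r < 1 := (div_lt_one hr0).mpr hlr
    have h2 : 0 < 1 - lam / r := by linarith
    positivity
  -- choose M
  obtain ⟨M₀, hM₀⟩ := pow_unbounded_of_one_lt ((2 * 4 ^ (k + 1)) / (c₀ * q ^ k)) hr
  set M : ℕ := max M₀ 1 with hMdef
  have hMbig : 2 * 4 ^ (k + 1) ≤ c₀ * q ^ k * r ^ M := by
    have hcq : 0 < c₀ * q ^ k := by positivity
    have h1 : (2 * 4 ^ (k + 1)) / (c₀ * q ^ k) < r ^ M₀ := hM₀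
    have h2 : r ^ M₀ ≤ r ^ M := pow_le_pow_right₀ (le_of_lt hr) (le_max_left _ _)
    have h3 : (2 * 4 ^ (k + 1)) / (c₀ * q ^ k) ≤ r ^ M := le_of_lt (lt_of_lt_of_le h1 h2)
    calc 2 * 4 ^ (k + 1) = ((2 * 4 ^ (k + 1)) / (c₀ * q ^ k)) * (c₀ * q ^ k) := by
          field_simp
      _ ≤ r ^ M * (c₀ * q ^ k) := mul_le_mul_of_nonneg_right h3 (le_of_lt hcq)
      _ = c₀ * q ^ k * r ^ M := by ring
  refine ⟨M, le_max_right _ _, ?_⟩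
  intro m' hag hbig
  have hRm' : Rpoly m' p = Rpoly m p := Rpoly_congr m' m p (fun t ht ht' => hag t ht ht')
  have hm' : ∀ t, 1 ≤ t → t ≤ k → 1 ≤ m' t := by
    intro t ht ht'
    by_cases h : t ≤ p
    · rw [hag t ht h]; exact hm t ht h
    · exact le_trans (le_max_right _ _) (hbig t (by omega) (by omega))
  -- base bound
  have hbase : ∀ z : ℂ, r ≤ ‖z‖ →
      c₀ * ‖z‖ ^ (Rpoly m' p).natDegree ≤ ‖eval z (cpx (Rpoly m' p))‖ := by
    intro z hz
    rw [hRm']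
    have hmon : (cpx (Rpoly m p)).Monic := Monic.cpx (monic_Rpoly m p hp hm).1
    have hroots : ∀ α ∈ (cpx (Rpoly m p)).roots, Complex.abs α ≤ lam := by
      intro α hα
      refine abs_le_maxRootAbs (monic_Rpoly m p hp hm).1.ne_zero ?_
      rw [aeval_eq_eval_cpx]
      exact Polynomial.isRoot_of_mem_roots hα
    have := eval_lower_of_roots_le hmon hlam0 hroots hlr z hz
    rw [natDegree_cpx] at this
    exact this
  -- conclusion
  have hnoroot := Ppoly_no_big_roots m' p k hp hpk hm' hr hc₀ hbase M hbig hMbig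
  refine maxRootAbs_le (le_of_lt hr0) ?_
  intro z hz
  rw [← Complex.norm_eq_abs]
  by_contra h
  push_neg at h
  exact hnoroot z (le_of_lt h) (by rw [← aeval_eq_eval_cpx]; exact hz)

/-! ### Part (b): helpers -/

lemma multiset_prod_map_le {α : Type*} {s : Multiset α} (f g : α → ℝ)
    (h0 : ∀ x ∈ s, 0 ≤ f x) (h : ∀ x ∈ s, f x ≤ g x) :
    (s.map f).prod ≤ (s.map g).prod := by
  induction s using Multiset.induction with
  | empty => simp
  | cons a s ih =>
    rw [Multiset.map_cons, Multiset.map_cons, Multiset.prod_cons, Multiset.prod_cons]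
    have hf0 : ∀ x ∈ s, 0 ≤ f x := fun x hx => h0 x (Multiset.mem_cons_of_mem hx)
    have hfprod : 0 ≤ (s.map f).prod :=
      Multiset.prod_nonneg (by rintro x hx; obtain ⟨y, hy, rfl⟩ := Multiset.mem_map.mp hx; exact hf0 y hy)
    refine mul_le_mul (h a (Multiset.mem_cons_self a s))
      (ih hf0 (fun x hx => h x (Multiset.mem_cons_of_mem hx))) hfprod
      (le_trans (h0 a (Multiset.mem_cons_self a s)) (h a (Multiset.mem_cons_self a s)))

lemma multiset_prod_le_pow_card {s : Multiset ℝ} {c : ℝ}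
    (h0 : ∀ x ∈ s, 0 ≤ x) (h : ∀ x ∈ s, x ≤ c) :
    s.prod ≤ c ^ Multiset.card s := by
  induction s using Multiset.induction with
  | empty => simp
  | cons a s ih =>
    rw [Multiset.prod_cons, Multiset.card_cons, pow_succ']
    have ha0 := h0 a (Multiset.mem_cons_self a s)
    have hprod0 : 0 ≤ s.prod := Multiset.prod_nonneg fun x hx => h0 x (Multiset.mem_cons_of_mem hx)
    exact mul_le_mul (h a (Multiset.mem_cons_self a s))
      (ih (fun x hx => h0 x (Multiset.mem_cons_of_mem hx))
        (fun x hx => h x (Multiset.mem_cons_of_mem hx))) hprod0 (ha0.trans (h a (Multiset.mem_cons_self a s)))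

/-- The fundamental product swap: for monic `Q` and `W`, the product of `|Q|` over the
roots of `W` equals the product of `|W|` over the roots of `Q`. -/
lemma prod_abs_eval_swap {Q W : Polynomial ℂ} (hQ : Q.Monic) (hW : W.Monic) :
    (W.roots.map (fun w => Complex.abs (Q.eval w))).prod
      = (Q.roots.map (fun α => Complex.abs (W.eval α))).prod := by
  have h1 : (W.roots.map (fun w => Complex.abs (Q.eval w))).prod
      = (W.roots.map (fun w => ((Q.roots.map (fun α => Complex.abs (w - α))).prod))).prod := by
    congr 1
    exact Multiset.map_congr rfl fun w _ => abs_eval_eq_prod_roots hQ w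
  have h2 : (Q.roots.map (fun α => Complex.abs (W.eval α))).prod
      = (Q.roots.map (fun α => ((W.roots.map (fun w => Complex.abs (α - w))).prod))).prod := by
    congr 1
    exact Multiset.map_congr rfl fun α _ => abs_eval_eq_prod_roots hW α
  rw [h1, h2]
  rw [Multiset.prod_map_prod_map]
  congr 1
  apply Multiset.map_congr rfl
  intro α _
  congr 1
  apply Multiset.map_congr rfl
  intro w _
  exact (AbsoluteValue.map_sub Complex.abs α w).symm

lemma roots_X_pow_sub_C_norm {N : ℕ} (hN : 1 ≤ N) {ρ : ℝ} (hρ : 0 < ρ)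
    {w : ℂ} (hw : w ∈ (X ^ N - C ((ρ : ℂ) ^ N)).roots) : ‖w‖ = ρ := by
  have hne : (X ^ N - C ((ρ : ℂ) ^ N)) ≠ 0 :=
    (monic_X_pow_sub_C _ (by omega : N ≠ 0)).ne_zero
  have hroot : w ^ N = (ρ : ℂ) ^ N := by
    have := Polynomial.isRoot_of_mem_roots hw
    rw [IsRoot, eval_sub, eval_pow, eval_X, eval_C, sub_eq_zero] at this
    exact this
  have hnorm : ‖w‖ ^ N = ρ ^ N := by
    have := congrArg norm hroot
    rw [norm_pow] at this
    rw [this]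
    rw [Complex.norm_eq_abs, map_pow, Complex.abs_ofReal, abs_of_pos hρ]
  rcases lt_trichotomy ‖w‖ ρ with h | h | h
  · exfalso
    have := pow_lt_pow_left₀ h (norm_nonneg w) (by omega : N ≠ 0)
    rw [hnorm] at this
    exact lt_irrefl _ this
  · exact h
  · exfalso
    have := pow_lt_pow_left₀ h (le_of_lt hρ) (by omega : N ≠ 0)
    rw [hnorm] at this
    exact lt_irrefl _ this

lemma card_roots_X_pow_sub_C {N : ℕ} (hN : 1 ≤ N) (c : ℂ) :
    Multiset.card (X ^ N - C c).roots = N := by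
  rw [roots_card (monic_X_pow_sub_C _ (by omega : N ≠ 0)), natDegree_X_pow_sub_C]

/-- Product of `|α^N - ρ^N|` over roots of a monic polynomial, as a product over
the circle `|w| = ρ`. -/
lemma prod_eval_circle {Q : Polynomial ℂ} (hQ : Q.Monic) {N : ℕ} (hN : 1 ≤ N) (c : ℂ) :
    ((X ^ N - C c).roots.map (fun w => Complex.abs (Q.eval w))).prod
      = (Q.roots.map (fun α => Complex.abs (α ^ N - c))).prod := by
  rw [prod_abs_eval_swap hQ (monic_X_pow_sub_C _ (by omega : N ≠ 0))]
  congr 1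
  apply Multiset.map_congr rfl
  intro α _
  simp

lemma exists_circle_min (Q : Polynomial ℂ) {ρ : ℝ} (hρ : 0 < ρ)
    (hnoroot : ∀ w : ℂ, ‖w‖ = ρ → Q.eval w ≠ 0) :
    ∃ L : ℝ, 0 < L ∧ ∀ w : ℂ, ‖w‖ = ρ → L ≤ ‖Q.eval w‖ := by
  have hcpt : IsCompact (Metric.sphere (0:ℂ) ρ) := isCompact_sphere 0 ρ
  have hne : (Metric.sphere (0:ℂ) ρ).Nonempty := by
    refine ⟨(ρ : ℂ), ?_⟩
    rw [mem_sphere_zero_iff_norm, Complex.norm_eq_abs, Complex.abs_ofReal, abs_of_pos hρ]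
  have hcont : ContinuousOn (fun w : ℂ => ‖Q.eval w‖) (Metric.sphere (0:ℂ) ρ) :=
    (Q.continuous_aeval.norm).continuousOn
  obtain ⟨w₀, hw₀mem, hmin⟩ := hcpt.exists_isMinOn hne hcont
  refine ⟨‖Q.eval w₀‖, ?_, ?_⟩
  · rw [norm_pos_iff]
    exact hnoroot w₀ (mem_sphere_zero_iff_norm.mp hw₀mem)
  · intro w hw
    exact hmin (mem_sphere_zero_iff_norm.mpr hw)

lemma natDegree_Rpoly_sum (m' : ℕ → ℕ) (p : ℕ) (hp : 1 ≤ p) :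
    ∀ j (hpj : p ≤ j), (∀ t, 1 ≤ t → t ≤ j → 1 ≤ m' t) →
      (Rpoly m' j).natDegree
        = (∑ t ∈ Finset.Icc (p+1) j, m' t) + (j - p) + (Rpoly m' p).natDegree := by
  intro j hpj
  induction j, hpj using Nat.le_induction with
  | base =>
    intro _
    rw [show Finset.Icc (p+1) p = ∅ from Finset.Icc_eq_empty (by omega)]
    simp
  | succ n hn ih =>
    intro hm
    have h1n : 1 ≤ n := le_trans hp hn
    rw [natDegree_Rpoly_succ m' h1n hm,
      ih (fun t ht ht' => hm t ht (by omega)),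
      Finset.sum_Icc_succ_top (by omega : p + 1 ≤ n + 1)]
    omega

/-- Key induction for part (b): sharp lower bounds on the circle `‖w‖ = ρ`. -/
lemma circle_lower (m' : ℕ → ℕ) (p k : ℕ) (hp : 1 ≤ p)
    (hm' : ∀ t, 1 ≤ t → t ≤ k → 1 ≤ m' t)
    {ρ : ℝ} (hρ : 1 < ρ) {L : ℝ} (hL : 0 < L)
    (hbase : ∀ w : ℂ, ‖w‖ = ρ → L ≤ ‖eval w (cpx (Rpoly m' p))‖)
    {η : ℝ} (hη0 : 0 < η) (hη2 : η ≤ 1/2)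
    (M : ℕ) (hM : ∀ t, p < t → t ≤ k → M ≤ m' t)
    (hMb : 2 * 4^(k+1) * ρ ^ (k + 1 + (Rpoly m' p).natDegree)
        ≤ η * (ρ - 1) * ((1/2 : ℝ)^k * (min 1 (ρ-1))^k * L) * ρ ^ M) :
    ∀ j (hpj : p ≤ j), j ≤ k → ∀ w : ℂ, ‖w‖ = ρ →
      (1 - η)^(j - p) * ρ ^ (∑ t ∈ Finset.Icc (p+1) j, m' t) * ‖w - 1‖^(j - p)
          * ‖eval w (cpx (Rpoly m' p))‖ ≤ ‖eval w (cpx (Rpoly m' j))‖ := by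
  have hρ0 : 0 < ρ := lt_trans zero_lt_one hρ
  have hρ1 : (1:ℝ) ≤ ρ := le_of_lt hρ
  set cc : ℝ := (1/2 : ℝ)^k * (min 1 (ρ-1))^k * L with hccdef
  have hmin0 : 0 < min 1 (ρ-1) := lt_min zero_lt_one (by linarith)
  have hmin1 : min 1 (ρ-1) ≤ 1 := min_le_left _ _
  have hcc0 : 0 < cc := by rw [hccdef]; positivity
  have hη1 : 1 - η ≤ 1 := by linarith
  have hηhalf : (1/2 : ℝ) ≤ 1 - η := by linarith
  have hη05 : (0:ℝ) ≤ 1 - η := by linarith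
  intro j hpj
  induction j, hpj using Nat.le_induction with
  | base =>
    intro _ w hw
    rw [show Finset.Icc (p+1) p = ∅ from Finset.Icc_eq_empty (by omega)]
    simp
  | succ n hn ih =>
    intro hk1 w hw
    have hnk : n ≤ k := by omega
    have h1n : 1 ≤ n := le_trans hp hn
    have ihw := ih hnk w hw
    set B : ℝ := ‖eval w (cpx (Rpoly m' p))‖ with hBdef
    have hBL : L ≤ B := hbase w hw
    have hw1 : 1 ≤ ‖w‖ := by rw [hw]; exact hρ1
    set σ : ℕ := ∑ t ∈ Finset.Icc (p+1) n, m' t with hσdef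
    set d : ℕ := (Rpoly m' n).natDegree with hddef
    set a : ℕ := m' (n+1) with hadef
    have haM : M ≤ a := hM (n+1) (by omega) (by omega)
    have hd_eq : d = σ + (n - p) + (Rpoly m' p).natDegree :=
      natDegree_Rpoly_sum m' p hp n hn (fun t ht ht' => hm' t ht (by omega))
    have hwm1_lb : ρ - 1 ≤ ‖w - 1‖ := by
      calc ρ - 1 = ‖w‖ - ‖(1:ℂ)‖ := by rw [hw, norm_one]
        _ ≤ ‖w - 1‖ := norm_sub_norm_le w 1
    have hwm1_0 : (0:ℝ) < ‖w - 1‖ := lt_of_lt_of_le (by linarith) hwm1_lb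
    -- crude lower bound for ‖R_n(w)‖
    have hcrude : cc * ρ ^ σ ≤ ‖eval w (cpx (Rpoly m' n))‖ := by
      refine le_trans ?_ ihw
      have e1 : (1/2 : ℝ)^k ≤ (1 - η)^(n - p) := by
        calc (1/2 : ℝ)^k ≤ (1 - η)^k := pow_le_pow_left₀ (by norm_num) hηhalf k
          _ ≤ (1 - η)^(n - p) := pow_le_pow_of_le_one hη05 hη1 (by omega)
      have e2 : (min 1 (ρ-1))^k ≤ ‖w - 1‖^(n - p) := by
        calc (min 1 (ρ-1))^k ≤ (min 1 (ρ-1))^(n - p) :=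
              pow_le_pow_of_le_one (le_of_lt hmin0) hmin1 (by omega)
          _ ≤ ‖w - 1‖^(n - p) := by
              refine pow_le_pow_left₀ (le_of_lt hmin0) ?_ _
              exact le_trans (min_le_right _ _) hwm1_lb
      calc cc * ρ ^ σ = ((1/2:ℝ)^k * ρ ^ σ * (min 1 (ρ-1))^k) * L := by
            rw [hccdef]; ring
        _ ≤ (1 - η)^(n - p) * ρ ^ σ * ‖w - 1‖^(n - p) * B := by
            refine mul_le_mul ?_ hBL (le_of_lt hL) (by positivity)
            refine mul_le_mul (mul_le_mul e1 le_rfl (by positivity) (by positivity)) e2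
              (by positivity) (by positivity)
        _ = (1 - η)^(n - p) * ρ ^ σ * ‖w - 1‖^(n - p) * B := rfl
    have hRn_pos : 0 < ‖eval w (cpx (Rpoly m' n))‖ :=
      lt_of_lt_of_le (by positivity) hcrude
    -- the reverse term is small
    have hrev : ‖eval w (cpx (Rpoly m' n)).reverse‖ ≤ 4 ^ (k + 1) * ρ ^ d := by
      have := norm_rev_eval_le m' h1n hnk (z := w) hw1
      rwa [hw] at this
    have hjunk : ‖(-1 : ℂ) ^ (n + 1) * (2 * w) * eval w (cpx (Rpoly m' n)).reverse‖
        ≤ 2 * ρ * (4 ^ (k + 1) * ρ ^ d) := by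
      rw [norm_mul, norm_mul, norm_pow, norm_neg, norm_one, one_pow, one_mul, norm_mul, hw]
      have h2 : ‖(2:ℂ)‖ = 2 := by norm_num
      rw [h2]
      exact mul_le_mul_of_nonneg_left hrev (by positivity)
    -- junk is at most η times the main term
    have hkey : 2 * ρ * (4 ^ (k + 1) * ρ ^ d)
        ≤ η * (ρ ^ a * ‖w - 1‖ * ‖eval w (cpx (Rpoly m' n))‖) := by
      have lhs_eq : 2 * ρ * (4 ^ (k + 1) * ρ ^ d)
          = (2 * 4 ^ (k+1) * ρ ^ (1 + (n - p) + (Rpoly m' p).natDegree)) * ρ ^ σ := by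
        rw [hd_eq, pow_add, pow_add, pow_add, pow_add]
        ring
      have lhs_le : 2 * ρ * (4 ^ (k + 1) * ρ ^ d)
          ≤ (2 * 4 ^ (k+1) * ρ ^ (k + 1 + (Rpoly m' p).natDegree)) * ρ ^ σ := by
        rw [lhs_eq]
        refine mul_le_mul_of_nonneg_right (mul_le_mul_of_nonneg_left
          (pow_le_pow_right₀ hρ1 (by omega)) (by positivity)) (by positivity)
      refine lhs_le.trans ?_
      have rhs_ge : η * (ρ - 1) * cc * ρ ^ M * ρ ^ σ
          ≤ η * (ρ ^ a * ‖w - 1‖ * ‖eval w (cpx (Rpoly m' n))‖) := by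
        have e3 : ρ ^ M ≤ ρ ^ a := pow_le_pow_right₀ hρ1 haM
        calc η * (ρ - 1) * cc * ρ ^ M * ρ ^ σ
            ≤ η * (ρ - 1) * cc * ρ ^ a * ρ ^ σ := by
              refine mul_le_mul_of_nonneg_right (mul_le_mul_of_nonneg_left e3 ?_) (by positivity)
              exact mul_nonneg (mul_nonneg (le_of_lt hη0) (by linarith)) (le_of_lt hcc0)
          _ = η * (ρ ^ a * (ρ - 1) * (cc * ρ ^ σ)) := by ring
          _ ≤ η * (ρ ^ a * ‖w - 1‖ * ‖eval w (cpx (Rpoly m' n))‖) := by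
              refine mul_le_mul_of_nonneg_left ?_ (le_of_lt hη0)
              refine mul_le_mul (mul_le_mul_of_nonneg_left hwm1_lb (by positivity)) hcrude
                (by positivity) (by positivity)
      refine le_trans ?_ rhs_ge
      exact mul_le_mul_of_nonneg_right hMb (by positivity)
    -- main estimate
    have hmain_norm : ‖w ^ a * (w - 1) * eval w (cpx (Rpoly m' n))‖
        = ρ ^ a * ‖w - 1‖ * ‖eval w (cpx (Rpoly m' n))‖ := by
      rw [norm_mul, norm_mul, norm_pow, hw]
    have htri : ρ ^ a * ‖w - 1‖ * ‖eval w (cpx (Rpoly m' n))‖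
        - 2 * ρ * (4 ^ (k + 1) * ρ ^ d) ≤ ‖eval w (cpx (Rpoly m' (n + 1)))‖ := by
      rw [eval_cpx_Rpoly_succ m' h1n w]
      set A := w ^ a * (w - 1) * eval w (cpx (Rpoly m' n))
      set Bt := (-1 : ℂ) ^ (n + 1) * (2 * w) * eval w (cpx (Rpoly m' n)).reverse
      calc ρ ^ a * ‖w - 1‖ * ‖eval w (cpx (Rpoly m' n))‖ - 2 * ρ * (4 ^ (k + 1) * ρ ^ d)
          ≤ ‖A‖ - ‖Bt‖ := by
            rw [hmain_norm]
            exact sub_le_sub_left hjunk _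
        _ = ‖A‖ - ‖-Bt‖ := by rw [norm_neg]
        _ ≤ ‖A - -Bt‖ := norm_sub_norm_le A (-Bt)
        _ = ‖A + Bt‖ := by rw [sub_neg_eq_add]
    -- conclude
    have hfinal : (1 - η) * (ρ ^ a * ‖w - 1‖ * ‖eval w (cpx (Rpoly m' n))‖)
        ≤ ‖eval w (cpx (Rpoly m' (n + 1)))‖ := by
      refine le_trans ?_ htri
      nlinarith [hkey, hRn_pos]
    refine le_trans ?_ hfinal
    have hsum : ∑ t ∈ Finset.Icc (p+1) (n+1), m' t = σ + a := by
      rw [hσdef, hadef, Finset.sum_Icc_succ_top (by omega : p + 1 ≤ n + 1)]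
    have hpow1 : (1 - η)^(n + 1 - p) = (1 - η)^(n - p) * (1 - η) := by
      rw [← pow_succ]
      congr 1
      omega
    have hpow2 : ‖w - 1‖^(n + 1 - p) = ‖w - 1‖^(n - p) * ‖w - 1‖ := by
      rw [← pow_succ]
      congr 1
      omega
    calc (1 - η)^(n + 1 - p) * ρ ^ (∑ t ∈ Finset.Icc (p+1) (n+1), m' t)
          * ‖w - 1‖^(n + 1 - p) * B
        = (1 - η) * (ρ ^ a * ‖w - 1‖
            * ((1 - η)^(n - p) * ρ ^ σ * ‖w - 1‖^(n - p) * B)) := by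
          rw [hsum, hpow1, hpow2, pow_add]
          ring
      _ ≤ (1 - η) * (ρ ^ a * ‖w - 1‖ * ‖eval w (cpx (Rpoly m' n))‖) := by
          refine mul_le_mul_of_nonneg_left ?_ hη05
          refine mul_le_mul_of_nonneg_left ihw (by positivity)

lemma monic_Ppoly (m : ℕ → ℕ) (k : ℕ) (hk : 1 ≤ k)
    (hm : ∀ t, 1 ≤ t → t ≤ k → 1 ≤ m t) (hmk1 : 1 ≤ m (k+1)) :
    (Ppoly m k).Monic ∧ (Ppoly m k).natDegree = m (k+1) + (Rpoly m k).natDegree := by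
  obtain ⟨hRm, _⟩ := monic_Rpoly m k hk hm
  have hA : (X ^ (m (k+1)) * Rpoly m k).Monic := (monic_X_pow _).mul hRm
  have hdA : (X ^ (m (k+1)) * Rpoly m k).natDegree = m (k+1) + (Rpoly m k).natDegree := by
    rw [(monic_X_pow _).natDegree_mul hRm, natDegree_X_pow]
  have hdB : ((-1 : Polynomial ℤ) ^ (k + 1) * (Rpoly m k).reverse).natDegree
      ≤ (Rpoly m k).natDegree := by
    calc ((-1 : Polynomial ℤ) ^ (k + 1) * (Rpoly m k).reverse).natDegree
        ≤ ((-1 : Polynomial ℤ) ^ (k + 1)).natDegree + (Rpoly m k).reverse.natDegree :=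
          natDegree_mul_le
      _ ≤ (Rpoly m k).natDegree := by
          have h0 : ((-1 : Polynomial ℤ) ^ (k + 1)).natDegree = 0 := by simp [natDegree_pow]
          have := (Rpoly m k).reverse_natDegree_le
          omega
  have hlt : ((-1 : Polynomial ℤ) ^ (k + 1) * (Rpoly m k).reverse).natDegree
      < (X ^ (m (k+1)) * Rpoly m k).natDegree := by
    rw [hdA]; omega
  constructor
  · exact hA.add_of_left (degree_lt_degree hlt)
  · rw [Ppoly, natDegree_add_eq_left_of_natDegree_lt hlt, hdA]

lemma circle_lower_P (m' : ℕ → ℕ) (p k : ℕ) (hp : 1 ≤ p) (hpk : p ≤ k)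
    (hm' : ∀ t, 1 ≤ t → t ≤ k → 1 ≤ m' t)
    {ρ : ℝ} (hρ : 1 < ρ) {L : ℝ} (hL : 0 < L)
    (hbase : ∀ w : ℂ, ‖w‖ = ρ → L ≤ ‖eval w (cpx (Rpoly m' p))‖)
    {η : ℝ} (hη0 : 0 < η) (hη2 : η ≤ 1/2)
    (M : ℕ) (hM : ∀ t, p < t → t ≤ k + 1 → M ≤ m' t)
    (hMb : 2 * 4^(k+1) * ρ ^ (k + 1 + (Rpoly m' p).natDegree)
        ≤ η * (ρ - 1) * ((1/2 : ℝ)^k * (min 1 (ρ-1))^k * L) * ρ ^ M)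
    (hMb2 : 4^(k+1) * ρ ^ (k + (Rpoly m' p).natDegree)
        ≤ η * ((1/2 : ℝ)^k * (min 1 (ρ-1))^k * L) * ρ ^ M) :
    ∀ w : ℂ, ‖w‖ = ρ →
      (1 - η)^(k + 1 - p) * ρ ^ (∑ t ∈ Finset.Icc (p+1) (k+1), m' t) * ‖w - 1‖^(k - p)
          * ‖eval w (cpx (Rpoly m' p))‖ ≤ ‖eval w (cpx (Ppoly m' k))‖ := by
  have hρ0 : 0 < ρ := lt_trans zero_lt_one hρ
  have hρ1 : (1:ℝ) ≤ ρ := le_of_lt hρ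
  set cc : ℝ := (1/2 : ℝ)^k * (min 1 (ρ-1))^k * L with hccdef
  have hmin0 : 0 < min 1 (ρ-1) := lt_min zero_lt_one (by linarith)
  have hmin1 : min 1 (ρ-1) ≤ 1 := min_le_left _ _
  have hcc0 : 0 < cc := by rw [hccdef]; positivity
  have hη1 : 1 - η ≤ 1 := by linarith
  have hηhalf : (1/2 : ℝ) ≤ 1 - η := by linarith
  have hη05 : (0:ℝ) ≤ 1 - η := by linarith
  intro w hw
  have hw1 : 1 ≤ ‖w‖ := by rw [hw]; exact hρ1
  set B : ℝ := ‖eval w (cpx (Rpoly m' p))‖ with hBdef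
  have hBL : L ≤ B := hbase w hw
  set σ : ℕ := ∑ t ∈ Finset.Icc (p+1) k, m' t with hσdef
  set d : ℕ := (Rpoly m' k).natDegree with hddef
  set a : ℕ := m' (k+1) with hadef
  have haM : M ≤ a := hM (k+1) (by omega) le_rfl
  have hlow := circle_lower m' p k hp hm' hρ hL hbase hη0 hη2 M
    (fun t ht ht' => hM t ht (by omega)) hMb k hpk le_rfl w hw
  have hd_eq : d = σ + (k - p) + (Rpoly m' p).natDegree :=
    natDegree_Rpoly_sum m' p hp k hpk hm'
  have hwm1_lb : ρ - 1 ≤ ‖w - 1‖ := by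
    calc ρ - 1 = ‖w‖ - ‖(1:ℂ)‖ := by rw [hw, norm_one]
      _ ≤ ‖w - 1‖ := norm_sub_norm_le w 1
  -- crude lower bound for ‖R_k(w)‖
  have hcrude : cc * ρ ^ σ ≤ ‖eval w (cpx (Rpoly m' k))‖ := by
    refine le_trans ?_ hlow
    have e1 : (1/2 : ℝ)^k ≤ (1 - η)^(k - p) := by
      calc (1/2 : ℝ)^k ≤ (1 - η)^k := pow_le_pow_left₀ (by norm_num) hηhalf k
        _ ≤ (1 - η)^(k - p) := pow_le_pow_of_le_one hη05 hη1 (by omega)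
    have e2 : (min 1 (ρ-1))^k ≤ ‖w - 1‖^(k - p) := by
      calc (min 1 (ρ-1))^k ≤ (min 1 (ρ-1))^(k - p) :=
            pow_le_pow_of_le_one (le_of_lt hmin0) hmin1 (by omega)
        _ ≤ ‖w - 1‖^(k - p) := by
            refine pow_le_pow_left₀ (le_of_lt hmin0) ?_ _
            exact le_trans (min_le_right _ _) hwm1_lb
    calc cc * ρ ^ σ = ((1/2:ℝ)^k * ρ ^ σ * (min 1 (ρ-1))^k) * L := by
          rw [hccdef]; ring
      _ ≤ (1 - η)^(k - p) * ρ ^ σ * ‖w - 1‖^(k - p) * B := by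
          refine mul_le_mul ?_ hBL (le_of_lt hL) (by positivity)
          refine mul_le_mul (mul_le_mul e1 le_rfl (by positivity) (by positivity)) e2
            (by positivity) (by positivity)
  have hRk_pos : 0 < ‖eval w (cpx (Rpoly m' k))‖ := lt_of_lt_of_le (by positivity) hcrude
  -- reverse term
  have hrev : ‖eval w (cpx (Rpoly m' k)).reverse‖ ≤ 4 ^ (k + 1) * ρ ^ d := by
    have := norm_rev_eval_le m' (le_trans hp hpk) le_rfl (z := w) hw1
    rwa [hw] at this
  have hjunk : ‖(-1 : ℂ) ^ (k + 1) * eval w (cpx (Rpoly m' k)).reverse‖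
      ≤ 4 ^ (k + 1) * ρ ^ d := by
    rw [norm_mul, norm_pow, norm_neg, norm_one, one_pow, one_mul]
    exact hrev
  have hkey : 4 ^ (k + 1) * ρ ^ d ≤ η * (ρ ^ a * ‖eval w (cpx (Rpoly m' k))‖) := by
    have lhs_eq : 4 ^ (k + 1) * ρ ^ d
        = (4 ^ (k+1) * ρ ^ ((k - p) + (Rpoly m' p).natDegree)) * ρ ^ σ := by
      rw [hd_eq, pow_add, pow_add]
      ring
    have lhs_le : 4 ^ (k + 1) * ρ ^ d
        ≤ (4 ^ (k+1) * ρ ^ (k + (Rpoly m' p).natDegree)) * ρ ^ σ := by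
      rw [lhs_eq]
      refine mul_le_mul_of_nonneg_right (mul_le_mul_of_nonneg_left
        (pow_le_pow_right₀ hρ1 (by omega)) (by positivity)) (by positivity)
    refine lhs_le.trans ?_
    have rhs_ge : η * cc * ρ ^ M * ρ ^ σ ≤ η * (ρ ^ a * ‖eval w (cpx (Rpoly m' k))‖) := by
      have e3 : ρ ^ M ≤ ρ ^ a := pow_le_pow_right₀ hρ1 haM
      calc η * cc * ρ ^ M * ρ ^ σ ≤ η * cc * ρ ^ a * ρ ^ σ := by
            refine mul_le_mul_of_nonneg_right (mul_le_mul_of_nonneg_left e3 (by positivity))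
              (by positivity)
        _ = η * (ρ ^ a * (cc * ρ ^ σ)) := by ring
        _ ≤ η * (ρ ^ a * ‖eval w (cpx (Rpoly m' k))‖) := by
            refine mul_le_mul_of_nonneg_left ?_ (le_of_lt hη0)
            exact mul_le_mul_of_nonneg_left hcrude (by positivity)
    refine le_trans ?_ rhs_ge
    exact mul_le_mul_of_nonneg_right hMb2 (by positivity)
  have hmain_norm : ‖w ^ a * eval w (cpx (Rpoly m' k))‖
      = ρ ^ a * ‖eval w (cpx (Rpoly m' k))‖ := by
    rw [norm_mul, norm_pow, hw]
  have htri : ρ ^ a * ‖eval w (cpx (Rpoly m' k))‖ - 4 ^ (k + 1) * ρ ^ d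
      ≤ ‖eval w (cpx (Ppoly m' k))‖ := by
    rw [eval_cpx_Ppoly m' k w]
    set A := w ^ a * eval w (cpx (Rpoly m' k))
    set Bt := (-1 : ℂ) ^ (k + 1) * eval w (cpx (Rpoly m' k)).reverse
    calc ρ ^ a * ‖eval w (cpx (Rpoly m' k))‖ - 4 ^ (k + 1) * ρ ^ d
        ≤ ‖A‖ - ‖Bt‖ := by
          rw [hmain_norm]
          exact sub_le_sub_left hjunk _
      _ = ‖A‖ - ‖-Bt‖ := by rw [norm_neg]
      _ ≤ ‖A - -Bt‖ := norm_sub_norm_le A (-Bt)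
      _ = ‖A + Bt‖ := by rw [sub_neg_eq_add]
  have hfinal : (1 - η) * (ρ ^ a * ‖eval w (cpx (Rpoly m' k))‖)
      ≤ ‖eval w (cpx (Ppoly m' k))‖ := by
    refine le_trans ?_ htri
    nlinarith [hkey, hRk_pos]
  refine le_trans ?_ hfinal
  have hsum : ∑ t ∈ Finset.Icc (p+1) (k+1), m' t = σ + a := by
    rw [hσdef, hadef, Finset.sum_Icc_succ_top (by omega : p + 1 ≤ k + 1)]
  have hpow1 : (1 - η)^(k + 1 - p) = (1 - η)^(k - p) * (1 - η) := by
    rw [← pow_succ]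
    congr 1
    omega
  calc (1 - η)^(k + 1 - p) * ρ ^ (∑ t ∈ Finset.Icc (p+1) (k+1), m' t)
        * ‖w - 1‖^(k - p) * B
      = (1 - η) * (ρ ^ a
          * ((1 - η)^(k - p) * ρ ^ σ * ‖w - 1‖^(k - p) * B)) := by
        rw [hsum, hpow1, pow_add]
        ring
    _ ≤ (1 - η) * (ρ ^ a * ‖eval w (cpx (Rpoly m' k))‖) := by
        refine mul_le_mul_of_nonneg_left ?_ hη05
        refine mul_le_mul_of_nonneg_left hlow (by positivity)

set_option maxHeartbeats 1000000 in
/-- Part (b): `Ppoly` has a root of absolute value bigger than `maxRootAbs (Rpoly m p) - ε`. -/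
lemma part_b (m : ℕ → ℕ) (p k : ℕ) (hp : 1 ≤ p) (hpk : p ≤ k)
    (hm : ∀ t, 1 ≤ t → t ≤ p → 1 ≤ m t) {ε : ℝ} (hε : 0 < ε) :
    ∃ M : ℕ, 1 ≤ M ∧ ∀ m' : ℕ → ℕ, (∀ t, 1 ≤ t → t ≤ p → m' t = m t) →
      (∀ t, p < t → t ≤ k + 1 → M ≤ m' t) →
      ∃ z : ℂ, aeval z (Ppoly m' k) = 0 ∧ maxRootAbs (Rpoly m p) - ε < Complex.abs z := by
  classical
  obtain ⟨hBmon, hBdeg⟩ := monic_Rpoly m p hp hm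
  set lam : ℝ := maxRootAbs (Rpoly m p) with hlamdef
  have hlam1 : 1 < lam := one_lt_maxRootAbs_Rpoly m p hp hm
  have hBne : Rpoly m p ≠ 0 := hBmon.ne_zero
  set Bc : Polynomial ℂ := cpx (Rpoly m p) with hBcdef
  have hBcmon : Bc.Monic := Monic.cpx hBmon
  have hBcne : Bc ≠ 0 := cpx_ne_zero hBne
  set dp : ℕ := (Rpoly m p).natDegree with hdpdef
  have hdp1 : 1 ≤ dp := by rw [hBdeg]; omega
  -- the maximal root z₀
  obtain ⟨z₀, hz₀root, hz₀abs⟩ := exists_root_abs_eq_maxRootAbs hBne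
    (exists_root_cpx hBmon hdp1)
  have hz₀mem : z₀ ∈ Bc.roots := by
    rw [mem_roots hBcne]
    rw [aeval_eq_eval_cpx] at hz₀root
    exact hz₀root
  -- the gap radius ρ
  set S : Finset ℝ := (Bc.roots.map (fun β => Complex.abs β)).toFinset.filter
    (fun v => v < lam) with hSdef
  set F : Finset ℝ := insert (max 1 (lam - ε)) S with hFdef
  have hFne : F.Nonempty := Finset.insert_nonempty _ _
  set μ : ℝ := F.max' hFne with hμdef
  have hμlt : μ < lam := by
    rw [hμdef]
    rw [Finset.max'_lt_iff]
    intro v hv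
    rw [hFdef] at hv
    rcases Finset.mem_insert.mp hv with rfl | hv
    · exact max_lt hlam1 (by linarith)
    · exact (Finset.mem_filter.mp hv).2
  have hμ1 : 1 ≤ μ := le_trans (le_max_left 1 (lam - ε))
    (Finset.le_max' F _ (Finset.mem_insert_self _ _))
  have hμε : lam - ε ≤ μ := le_trans (le_max_right 1 (lam - ε))
    (Finset.le_max' F _ (Finset.mem_insert_self _ _))
  have hroots_le : ∀ β ∈ Bc.roots, Complex.abs β ≤ μ ∨ Complex.abs β = lam := by
    intro β hβ
    have hβroot : aeval β (Rpoly m p) = 0 := by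
      rw [aeval_eq_eval_cpx]
      exact Polynomial.isRoot_of_mem_roots hβ
    have hβle : Complex.abs β ≤ lam := abs_le_maxRootAbs hBne hβroot
    rcases lt_or_eq_of_le hβle with hlt | heq
    · left
      refine Finset.le_max' F _ ?_
      rw [hFdef]
      refine Finset.mem_insert_of_mem ?_
      rw [hSdef, Finset.mem_filter, Multiset.mem_toFinset]
      exact ⟨Multiset.mem_map_of_mem _ hβ, hlt⟩
    · right; exact heq
  set ρ : ℝ := (μ + lam)/2 with hρdef
  have hρμ : μ < ρ := by rw [hρdef]; linarith
  have hρlam : ρ < lam := by rw [hρdef]; linarith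
  have hρ1 : 1 < ρ := by rw [hρdef]; linarith
  have hρ0 : 0 < ρ := by linarith
  have hρε : lam - ε < ρ := by rw [hρdef]; linarith
  -- no roots on the circle of radius ρ, hence a positive minimum
  have hnoroot : ∀ w : ℂ, ‖w‖ = ρ → Bc.eval w ≠ 0 := by
    intro w hw hzero
    have hwmem : w ∈ Bc.roots := by
      rw [mem_roots hBcne]
      exact hzero
    rcases hroots_le w hwmem with h | h
    · rw [← Complex.norm_eq_abs, hw] at h; linarith
    · rw [← Complex.norm_eq_abs, hw] at h; linarith
  obtain ⟨L, hL0, hLbd⟩ := exists_circle_min Bc hρ0 hnoroot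
  -- constants
  set G : ℝ := lam / ρ with hGdef
  have hG1 : 1 < G := by rw [hGdef]; rw [lt_div_iff₀ hρ0]; linarith
  set G₂ : ℝ := (1 + G)/2 with hG₂def
  have hG₂1 : 1 < G₂ := by rw [hG₂def]; linarith
  have hG₂G : G₂ < G := by rw [hG₂def]; linarith
  set θ : ℝ := μ / ρ with hθdef
  have hθ0 : 0 < θ := by rw [hθdef]; positivity
  have hθ1 : θ < 1 := by rw [hθdef, div_lt_one hρ0]; linarith
  set η : ℝ := min (1/2) ((G - 1)/(2*G*(k+1))) with hηdef
  have hη0 : 0 < η := by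
    rw [hηdef]
    refine lt_min (by norm_num) ?_
    have hk1 : (0:ℝ) < (k:ℝ) + 1 := by positivity
    have : 0 < 2*G*(k+1) := by positivity
    exact div_pos (by linarith) this
  have hη2 : η ≤ 1/2 := by rw [hηdef]; exact min_le_left _ _
  set P1 : ℝ := (1 - η)^(k + 1 - p) with hP1def
  have hP1pos : 0 < P1 := by
    rw [hP1def]
    have : (0:ℝ) < 1 - η := by linarith
    positivity
  -- Bernoulli: G₂ ≤ P1 * G
  have hBern : G₂ ≤ P1 * G := by
    have h1 : 1 - ((k:ℝ) + 1) * η ≤ (1 - η)^(k+1) := by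
      have := one_add_mul_le_pow (a := -η) (by linarith) (k+1)
      calc 1 - ((k:ℝ) + 1) * η = 1 + (k+1 : ℕ) * (-η) := by push_cast; ring
        _ ≤ (1 + (-η))^(k+1) := this
        _ = (1 - η)^(k+1) := by ring_nf
    have h2 : (1 - η)^(k+1) ≤ P1 := by
      rw [hP1def]
      exact pow_le_pow_of_le_one (by linarith) (by linarith) (by omega)
    have h3 : η ≤ (G - 1)/(2*G*(k+1)) := by rw [hηdef]; exact min_le_right _ _
    have hGpos : 0 < G := by linarith
    have hk1 : (0:ℝ) < 2*G*((k:ℝ)+1) := by positivity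
    have h4 : ((k:ℝ)+1) * η ≤ (G-1)/(2*G) := by
      have := mul_le_mul_of_nonneg_left h3 (le_of_lt (by positivity : (0:ℝ) < (k:ℝ)+1))
      calc ((k:ℝ)+1) * η ≤ ((k:ℝ)+1) * ((G - 1)/(2*G*(k+1))) := this
        _ = (G-1)/(2*G) := by field_simp
      
    have h5 : G₂/G ≤ 1 - ((k:ℝ)+1)*η := by
      rw [hG₂def]
      have : (1+G)/2/G = 1 - (G-1)/(2*G) := by field_simp; ring
      rw [this]
      linarith
    calc G₂ = (G₂/G) * G := by field_simp
      _ ≤ (1 - ((k:ℝ)+1)*η) * G := mul_le_mul_of_nonneg_right h5 (le_of_lt hGpos)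
      _ ≤ ((1-η)^(k+1)) * G := mul_le_mul_of_nonneg_right h1 (le_of_lt hGpos)
      _ ≤ P1 * G := mul_le_mul_of_nonneg_right h2 (le_of_lt hGpos)
  -- choose M
  set cc : ℝ := (1/2 : ℝ)^k * (min 1 (ρ-1))^k * L with hccdef
  have hcc0 : 0 < cc := by
    have hmin0 : 0 < min 1 (ρ-1) := lt_min zero_lt_one (by linarith)
    rw [hccdef]; positivity
  have hc1 : 0 < η * (ρ - 1) * cc := by
    have : (0:ℝ) < ρ - 1 := by linarith
    positivity
  have hc2 : 0 < η * cc := by positivity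
  obtain ⟨M₁, hM₁⟩ := pow_unbounded_of_one_lt
    ((2 * 4^(k+1) * ρ ^ (k + 1 + dp)) / (η * (ρ - 1) * cc)) hρ1
  obtain ⟨M₂, hM₂⟩ := pow_unbounded_of_one_lt
    ((4^(k+1) * ρ ^ (k + dp)) / (η * cc)) hρ1
  set M : ℕ := max (max M₁ M₂) 1 with hMdef
  have hMb : 2 * 4^(k+1) * ρ ^ (k + 1 + dp) ≤ η * (ρ - 1) * cc * ρ ^ M := by
    have h1 : (2 * 4^(k+1) * ρ ^ (k + 1 + dp)) / (η * (ρ - 1) * cc) ≤ ρ ^ M :=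
      le_of_lt (lt_of_lt_of_le hM₁ (pow_le_pow_right₀ (le_of_lt hρ1) (by omega)))
    calc 2 * 4^(k+1) * ρ ^ (k + 1 + dp)
        = ((2 * 4^(k+1) * ρ ^ (k + 1 + dp)) / (η * (ρ - 1) * cc)) * (η * (ρ - 1) * cc) := by
          exact (div_mul_cancel₀ _ (ne_of_gt hc1)).symm
      _ ≤ ρ ^ M * (η * (ρ - 1) * cc) := mul_le_mul_of_nonneg_right h1 (le_of_lt hc1)
      _ = η * (ρ - 1) * cc * ρ ^ M := by ring
  have hMb2 : 4^(k+1) * ρ ^ (k + dp) ≤ η * cc * ρ ^ M := by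
    have h1 : (4^(k+1) * ρ ^ (k + dp)) / (η * cc) ≤ ρ ^ M :=
      le_of_lt (lt_of_lt_of_le hM₂ (pow_le_pow_right₀ (le_of_lt hρ1) (by omega)))
    calc 4^(k+1) * ρ ^ (k + dp)
        = ((4^(k+1) * ρ ^ (k + dp)) / (η * cc)) * (η * cc) := by field_simp
      _ ≤ ρ ^ M * (η * cc) := mul_le_mul_of_nonneg_right h1 (le_of_lt hc2)
      _ = η * cc * ρ ^ M := by ring
  refine ⟨M, le_max_right _ _, ?_⟩
  intro m' hag hbig
  have hRm' : Rpoly m' p = Rpoly m p := Rpoly_congr m' m p (fun t ht ht' => hag t ht ht')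
  have hm'pos : ∀ t, 1 ≤ t → t ≤ k → 1 ≤ m' t := by
    intro t ht ht'
    by_cases h : t ≤ p
    · rw [hag t ht h]; exact hm t ht h
    · exact le_trans (le_max_right _ _) (hbig t (by omega) (by omega))
  have hmk1 : 1 ≤ m' (k+1) := le_trans (le_max_right _ _) (hbig (k+1) (by omega) le_rfl)
  obtain ⟨hPmon, hPdeg⟩ := monic_Ppoly m' k (le_trans hp hpk) hm'pos hmk1
  have hPne : Ppoly m' k ≠ 0 := hPmon.ne_zero
  set Pc : Polynomial ℂ := cpx (Ppoly m' k) with hPcdef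
  have hPcmon : Pc.Monic := Monic.cpx hPmon
  set D : ℕ := (Ppoly m' k).natDegree with hDdef
  set σ : ℕ := ∑ t ∈ Finset.Icc (p+1) (k+1), m' t with hσdef
  set K : ℕ := k + 1 - p with hKdef
  set K' : ℕ := k - p with hK'def
  have hD_eq : D = σ + K' + dp := by
    have h1 : (Rpoly m' k).natDegree
        = (∑ t ∈ Finset.Icc (p+1) k, m' t) + (k - p) + (Rpoly m' p).natDegree :=
      natDegree_Rpoly_sum m' p hp k hpk hm'pos
    rw [hPdeg, h1, hRm', ← hdpdef, hσdef, hK'def,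
      Finset.sum_Icc_succ_top (by omega : p + 1 ≤ k + 1)]
    omega
  -- the per-point lower bound on the circle
  have hbase' : ∀ w : ℂ, ‖w‖ = ρ → L ≤ ‖eval w (cpx (Rpoly m' p))‖ := by
    intro w hw
    rw [hRm']
    exact hLbd w hw
  have hpt := circle_lower_P m' p k hp hpk hm'pos hρ1 hL0 hbase' hη0 hη2 M hbig
    (by rw [hRm']; exact hMb) (by rw [hRm']; exact hMb2)
  -- assume for contradiction that all roots are small
  by_contra hcon
  push_neg at hcon
  have hall : ∀ α ∈ Pc.roots, Complex.abs α ≤ μ := by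
    intro α hα
    have : aeval α (Ppoly m' k) = 0 := by
      rw [aeval_eq_eval_cpx]
      exact Polynomial.isRoot_of_mem_roots hα
    exact le_trans (hcon α this) hμε
  -- choose N
  have hev1 : ∀ᶠ N : ℕ in Filter.atTop, (2:ℝ) ≤ G ^ N :=
    (tendsto_pow_atTop_atTop_of_one_lt hG1).eventually_ge_atTop 2
  have hev2 : ∀ᶠ N : ℕ in Filter.atTop, θ ^ N ≤ 1/2 := by
    have := tendsto_pow_atTop_nhds_zero_of_lt_one (le_of_lt hθ0) hθ1
    exact this.eventually (eventually_le_nhds (by norm_num))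
  have hev3 : ∀ᶠ N : ℕ in Filter.atTop, (2:ℝ) ≤ ρ ^ N :=
    (tendsto_pow_atTop_atTop_of_one_lt hρ1).eventually_ge_atTop 2
  have hev4 : ∀ᶠ N : ℕ in Filter.atTop, (D:ℝ) * θ ^ N ≤ 1 := by
    have h0 := tendsto_pow_atTop_nhds_zero_of_lt_one (le_of_lt hθ0) hθ1
    have : Filter.Tendsto (fun N : ℕ => (D:ℝ) * θ ^ N) Filter.atTop (nhds ((D:ℝ) * 0)) :=
      h0.const_mul _
    rw [mul_zero] at this
    exact this.eventually (eventually_le_nhds (by norm_num))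
  have hev5 : ∀ᶠ N : ℕ in Filter.atTop, (3:ℝ) * 2^(K' + dp) < G₂ ^ N :=
    (tendsto_pow_atTop_atTop_of_one_lt hG₂1).eventually_gt_atTop _
  have hev6 : ∀ᶠ N : ℕ in Filter.atTop, 1 ≤ N := Filter.eventually_ge_atTop 1
  obtain ⟨N, hN1, hN2, hN3, hN4, hN5, hN6⟩ :=
    (hev1.and (hev2.and (hev3.and (hev4.and (hev5.and hev6))))).exists
  -- set up the circle of N-th roots
  set x : ℝ := ρ ^ N with hxdef
  have hx0 : 0 < x := by rw [hxdef]; positivity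
  have hx2 : 2 ≤ x := hN3
  set u : ℝ := μ ^ N with hudef
  have hu0 : 0 ≤ u := by rw [hudef]; positivity
  set g : ℝ := G ^ N with hgdef
  have hg2 : 2 ≤ g := hN1
  have h2x : 2 * x ≤ g * x := mul_le_mul_of_nonneg_right hg2 (le_of_lt hx0)
  have huθx : u = θ ^ N * x := by
    rw [hudef, hxdef, hθdef, ← mul_pow]
    congr 1
    field_simp
  have hux2 : u ≤ x / 2 := by
    rw [huθx]
    calc θ ^ N * x ≤ (1/2) * x := mul_le_mul_of_nonneg_right hN2 (le_of_lt hx0)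
      _ = x / 2 := by ring
  set W : Polynomial ℂ := X ^ N - C ((ρ:ℂ) ^ N) with hWdef
  have hWmon : W.Monic := monic_X_pow_sub_C _ (by omega : N ≠ 0)
  have hWcard : Multiset.card W.roots = N := card_roots_X_pow_sub_C hN6 _
  have hWcircle : ∀ w ∈ W.roots, ‖w‖ = ρ := fun w hw => roots_X_pow_sub_C_norm hN6 hρ0 hw
  have hρc : ‖(ρ:ℂ)^N‖ = x := by
    rw [norm_pow, Complex.norm_eq_abs, Complex.abs_ofReal, abs_of_pos hρ0, hxdef]
  -- per point bound
  have hpt' : ∀ w ∈ W.roots,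
      P1 * ρ ^ σ * ‖w - 1‖ ^ K' * ‖eval w Bc‖ ≤ Complex.abs (eval w Pc) := by
    intro w hw
    rw [← Complex.norm_eq_abs]
    have h1 := hpt w (hWcircle w hw)
    rw [hRm'] at h1
    exact h1
  set E : ℝ := (W.roots.map (fun w => Complex.abs (eval w Pc))).prod with hEdef
  have hElow : (W.roots.map (fun w => P1 * ρ ^ σ * ‖w - 1‖ ^ K' * ‖eval w Bc‖)).prod ≤ E := by
    refine multiset_prod_map_le _ _ ?_ hpt'
    intro w _
    have h1 : (0:ℝ) ≤ P1 * ρ ^ σ := mul_nonneg (le_of_lt hP1pos) (by positivity)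
    exact mul_nonneg (mul_nonneg h1 (by positivity)) (norm_nonneg _)
  -- split the product
  have hsplit : (W.roots.map (fun w => P1 * ρ ^ σ * ‖w - 1‖ ^ K' * ‖eval w Bc‖)).prod
      = (P1 * ρ ^ σ) ^ N * ((W.roots.map (fun w => ‖w - 1‖)).prod) ^ K'
        * (W.roots.map (fun w => ‖eval w Bc‖)).prod := by
    have e1 : (W.roots.map (fun w => P1 * ρ ^ σ * ‖w - 1‖ ^ K' * ‖eval w Bc‖)).prod
        = (W.roots.map (fun w => P1 * ρ ^ σ * ‖w - 1‖ ^ K')).prod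
          * (W.roots.map (fun w => ‖eval w Bc‖)).prod := by
      rw [← Multiset.prod_map_mul]
    have e2 : (W.roots.map (fun w => P1 * ρ ^ σ * ‖w - 1‖ ^ K')).prod
        = (W.roots.map (fun _ => P1 * ρ ^ σ)).prod
          * (W.roots.map (fun w => ‖w - 1‖ ^ K')).prod := by
      rw [← Multiset.prod_map_mul]
    have e3 : (W.roots.map (fun _ => P1 * ρ ^ σ)).prod = (P1 * ρ ^ σ) ^ N := by
      rw [Multiset.map_const', Multiset.prod_replicate, hWcard]
    have e4 : (W.roots.map (fun w => ‖w - 1‖ ^ K')).prod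
        = ((W.roots.map (fun w => ‖w - 1‖)).prod) ^ K' := Multiset.prod_map_pow
    rw [e1, e2, e3, e4]
  have hPW1 : (W.roots.map (fun w => ‖w - 1‖)).prod = x - 1 := by
    have e : W.roots.map (fun w => ‖w - 1‖)
        = W.roots.map (fun w => Complex.abs (eval w (X - C 1))) := by
      refine Multiset.map_congr rfl (fun w _ => ?_)
      rw [eval_sub, eval_X, eval_C, Complex.norm_eq_abs]
    rw [e, hWdef, prod_eval_circle (monic_X_sub_C (1:ℂ)) hN6, roots_X_sub_C,
      Multiset.map_singleton, Multiset.prod_singleton, one_pow]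
    have h1 : (1 : ℂ) - (ρ:ℂ)^N = (((1 - x : ℝ)) : ℂ) := by
      rw [hxdef]
      push_cast
      ring
    rw [h1, Complex.abs_ofReal, abs_of_nonpos (by linarith), neg_sub]
  have hPB : (W.roots.map (fun w => ‖eval w Bc‖)).prod
      = (Bc.roots.map (fun β => Complex.abs (β^N - (ρ:ℂ)^N))).prod := by
    have e : W.roots.map (fun w => ‖eval w Bc‖)
        = W.roots.map (fun w => Complex.abs (eval w Bc)) := by
      refine Multiset.map_congr rfl (fun w _ => ?_)
      rw [Complex.norm_eq_abs]
    rw [e, hWdef, prod_eval_circle hBcmon hN6]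
  -- lower bound for the product over the roots of Bc
  have hxu0 : (0:ℝ) ≤ x - u := by linarith
  have hgxfac : ∀ β : ℂ, Complex.abs β = lam → g*x - x ≤ Complex.abs (β^N - (ρ:ℂ)^N) := by
    intro β hβ
    have h1 : ‖β^N‖ = lam^N := by rw [norm_pow, Complex.norm_eq_abs, hβ]
    have h3 : lam ^ N = g * x := by
      rw [hgdef, hxdef, hGdef, ← mul_pow]
      congr 1
      field_simp
    calc g*x - x = ‖β^N‖ - ‖(ρ:ℂ)^N‖ := by rw [h1, hρc, h3]
      _ ≤ ‖β^N - (ρ:ℂ)^N‖ := norm_sub_norm_le _ _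
      _ = Complex.abs (β^N - (ρ:ℂ)^N) := (Complex.norm_eq_abs _)
  have hPBlow : (g*x - x) * (x - u) ^ (dp - 1)
      ≤ (Bc.roots.map (fun β => Complex.abs (β^N - (ρ:ℂ)^N))).prod := by
    have hcons : Bc.roots = z₀ ::ₘ (Bc.roots.erase z₀) := (Multiset.cons_erase hz₀mem).symm
    rw [hcons, Multiset.map_cons, Multiset.prod_cons]
    have hcard_erase : Multiset.card (Bc.roots.erase z₀) = dp - 1 := by
      rw [Multiset.card_erase_of_mem hz₀mem, roots_card hBcmon, natDegree_cpx]
      rfl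
    have hufac : ∀ β ∈ Bc.roots.erase z₀, x - u ≤ Complex.abs (β^N - (ρ:ℂ)^N) := by
      intro β hβ
      have hβmem : β ∈ Bc.roots := Multiset.mem_of_mem_erase hβ
      rcases hroots_le β hβmem with h | h
      · have hβN : ‖β^N‖ ≤ u := by
          rw [norm_pow, Complex.norm_eq_abs, hudef]
          exact pow_le_pow_left₀ (AbsoluteValue.nonneg _ _) h N
        calc x - u ≤ ‖(ρ:ℂ)^N‖ - ‖β^N‖ := by rw [hρc]; linarith
          _ ≤ ‖(ρ:ℂ)^N - β^N‖ := norm_sub_norm_le _ _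
          _ = Complex.abs (β^N - (ρ:ℂ)^N) := by
              rw [norm_sub_rev, Complex.norm_eq_abs]
      · have h1 := hgxfac β h
        linarith
    have hrest : (x - u) ^ (dp - 1)
        ≤ ((Bc.roots.erase z₀).map (fun β => Complex.abs (β^N - (ρ:ℂ)^N))).prod := by
      have := pow_card_le_multiset_prod (s := (Bc.roots.erase z₀).map
        (fun β => Complex.abs (β^N - (ρ:ℂ)^N))) hxu0 ?_
      · rwa [Multiset.card_map, hcard_erase] at this
      · rintro v hv
        obtain ⟨β, hβ, rfl⟩ := Multiset.mem_map.mp hv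
        exact hufac β hβ
    have hz0fac := hgxfac z₀ hz₀abs
    exact mul_le_mul hz0fac hrest (pow_nonneg hxu0 _) (AbsoluteValue.nonneg _ _)
  -- upper bound for E
  have hEup : E ≤ 3 * x ^ D := by
    have h1 : E = (Pc.roots.map (fun α => Complex.abs (α^N - (ρ:ℂ)^N))).prod := by
      rw [hEdef, hWdef, prod_eval_circle hPcmon hN6]
    have hcardP : Multiset.card (Pc.roots.map (fun α => Complex.abs (α^N - (ρ:ℂ)^N))) = D := by
      rw [Multiset.card_map, roots_card hPcmon, natDegree_cpx]
    have h2 : ∀ v ∈ Pc.roots.map (fun α => Complex.abs (α^N - (ρ:ℂ)^N)), v ≤ x + u := by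
      rintro v hv
      obtain ⟨α, hα, rfl⟩ := Multiset.mem_map.mp hv
      have hαu : ‖α^N‖ ≤ u := by
        rw [norm_pow, Complex.norm_eq_abs, hudef]
        exact pow_le_pow_left₀ (AbsoluteValue.nonneg _ _) (hall α hα) N
      calc Complex.abs (α^N - (ρ:ℂ)^N) = ‖α^N - (ρ:ℂ)^N‖ := (Complex.norm_eq_abs _).symm
        _ ≤ ‖α^N‖ + ‖(ρ:ℂ)^N‖ := norm_sub_le _ _
        _ ≤ x + u := by rw [hρc]; linarith
    have h3 := multiset_prod_le_pow_card (s := Pc.roots.map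
      (fun α => Complex.abs (α^N - (ρ:ℂ)^N)))
      (fun v hv => by
        obtain ⟨α, hα, rfl⟩ := Multiset.mem_map.mp hv
        exact AbsoluteValue.nonneg _ _) h2
    rw [hcardP] at h3
    have h4 : (x + u)^D ≤ 3 * x^D := by
      have hxu : x + u = x * (1 + θ^N) := by rw [huθx]; ring
      rw [hxu, mul_pow]
      have h5 : (1 + θ^N)^D ≤ Real.exp ((D:ℝ) * θ^N) := by
        have h6 : 1 + θ^N ≤ Real.exp (θ^N) := by linarith [Real.add_one_le_exp (θ^N)]
        calc (1 + θ^N)^D ≤ (Real.exp (θ^N))^D := pow_le_pow_left₀ (by positivity) h6 D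
          _ = Real.exp ((D:ℝ) * θ^N) := by rw [← Real.exp_nat_mul]
      have h7 : Real.exp ((D:ℝ)*θ^N) ≤ Real.exp 1 := Real.exp_le_exp.mpr hN4
      have h8 : Real.exp 1 ≤ 3 := by
        have := Real.exp_one_lt_d9
        linarith
      calc x^D * (1+θ^N)^D ≤ x^D * 3 :=
            mul_le_mul_of_nonneg_left (h5.trans (h7.trans h8)) (by positivity)
        _ = 3 * x^D := by ring
    rw [h1]
    exact le_trans h3 h4
  -- combine
  have hchain : (P1 * ρ ^ σ) ^ N * (x - 1) ^ K' * ((g*x - x) * (x - u) ^ (dp - 1))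
      ≤ 3 * x ^ D := by
    have h0 : (0:ℝ) ≤ (P1 * ρ ^ σ) ^ N * (x - 1) ^ K' := by
      have h1 : (0:ℝ) ≤ P1 * ρ ^ σ := mul_nonneg (le_of_lt hP1pos) (by positivity)
      have h2 : (0:ℝ) ≤ x - 1 := by linarith
      positivity
    calc (P1 * ρ ^ σ) ^ N * (x - 1) ^ K' * ((g*x - x) * (x - u) ^ (dp - 1))
        ≤ (P1 * ρ ^ σ) ^ N * (x - 1) ^ K'
          * (Bc.roots.map (fun β => Complex.abs (β^N - (ρ:ℂ)^N))).prod :=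
          mul_le_mul_of_nonneg_left hPBlow h0
      _ = (W.roots.map (fun w => P1 * ρ ^ σ * ‖w - 1‖ ^ K' * ‖eval w Bc‖)).prod := by
          rw [hsplit, hPW1, hPB]
      _ ≤ E := hElow
      _ ≤ 3 * x ^ D := hEup
  -- final arithmetic contradiction
  have hEnd : (P1 * G) ^ N * x ^ D ≤ 3 * 2 ^ (K' + dp) * x ^ D := by
    have hsigma : (ρ ^ σ : ℝ) ^ N = x ^ σ := by rw [hxdef, ← pow_mul, ← pow_mul, Nat.mul_comm]
    have key : (P1 * G) ^ N * x ^ D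
        ≤ 2 ^ (K' + dp) * ((P1 * ρ ^ σ) ^ N * (x - 1) ^ K' * ((g*x - x) * (x - u) ^ (dp - 1))) := by
      have e0 : (2:ℝ) ^ (K' + dp) = 2 ^ K' * 2 * 2 ^ (dp - 1) := by
        rw [← pow_succ, ← pow_add]
        congr 1
        omega
      have e1 : (P1 * G) ^ N * x ^ D
          = P1 ^ N * (x ^ σ * (x ^ K' * (g * (x * x ^ (dp - 1))))) := by
        rw [mul_pow, hD_eq, hgdef]
        rw [show σ + K' + dp = σ + (K' + (1 + (dp - 1))) from by omega]
        rw [pow_add, pow_add, pow_add, pow_one]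
        ring
      have e2 : 2 ^ (K' + dp) * ((P1 * ρ ^ σ) ^ N * (x - 1) ^ K' * ((g*x - x) * (x - u) ^ (dp - 1)))
          = P1 ^ N * (x ^ σ * ((2*(x-1)) ^ K' * ((2*(g*x - x)) * (2*(x - u)) ^ (dp - 1)))) := by
        rw [e0, mul_pow, hsigma, mul_pow, mul_pow]
        ring
      rw [e1, e2]
      have hx1 : x ≤ 2*(x-1) := by linarith
      have hxu : x ≤ 2*(x-u) := by linarith
      have hgxx : g * x ≤ 2*(g*x - x) := by linarith
      have hp1 : x ^ K' ≤ (2*(x-1)) ^ K' := pow_le_pow_left₀ (le_of_lt hx0) hx1 K'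
      have hp2 : x ^ (dp - 1) ≤ (2*(x - u)) ^ (dp - 1) :=
        pow_le_pow_left₀ (le_of_lt hx0) hxu (dp - 1)
      refine mul_le_mul_of_nonneg_left ?_ (pow_nonneg (le_of_lt hP1pos) N)
      refine mul_le_mul_of_nonneg_left ?_ (pow_nonneg (le_of_lt hx0) σ)
      have h3 : g * (x * x ^ (dp - 1)) ≤ (2*(g*x - x)) * (2*(x - u)) ^ (dp - 1) := by
        calc g * (x * x ^ (dp - 1)) = (g * x) * x ^ (dp - 1) := by ring
          _ ≤ (2*(g*x - x)) * (2*(x - u)) ^ (dp - 1) := by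
              refine mul_le_mul hgxx hp2 (by positivity) ?_
              linarith
      calc x ^ K' * (g * (x * x ^ (dp - 1)))
          ≤ x ^ K' * ((2*(g*x - x)) * (2*(x - u)) ^ (dp - 1)) :=
            mul_le_mul_of_nonneg_left h3 (by positivity)
        _ ≤ (2*(x-1)) ^ K' * ((2*(g*x - x)) * (2*(x - u)) ^ (dp - 1)) := by
            refine mul_le_mul_of_nonneg_right hp1 ?_
            have h4 : (0:ℝ) ≤ 2*(g*x-x) := by linarith
            positivity
    calc (P1 * G) ^ N * x ^ D
        ≤ 2 ^ (K' + dp) * ((P1 * ρ ^ σ) ^ N * (x - 1) ^ K' * ((g*x - x) * (x - u) ^ (dp - 1))) :=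
          key
      _ ≤ 2 ^ (K' + dp) * (3 * x ^ D) := mul_le_mul_of_nonneg_left hchain (by positivity)
      _ = 3 * 2 ^ (K' + dp) * x ^ D := by ring
  have hfin : (P1 * G) ^ N ≤ 3 * 2 ^ (K' + dp) :=
    le_of_mul_le_mul_right hEnd (by positivity)
  have hG₂N : G₂ ^ N ≤ (P1 * G) ^ N := pow_le_pow_left₀ (by linarith) hBern N
  linarith

end KT

/-- Theorem 1.3(2), polynomial form: for fixed `k ≥ 1`, `2 ≤ i ≤ k+1` and fixed
`m_1, …, m_{i-1} ≥ 1`, one has `λ(R_{(m_1,…,m_{i-1})}) > 1` and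
`λ(P_{(m_1,…,m_{k+1})}) → λ(R_{(m_1,…,m_{i-1})})` as `m_i, …, m_{k+1}` all tend
to `∞`. -/
theorem Ppoly_maxRootAbs_tendsto_Rpoly (k i : ℕ) (hk : 1 ≤ k)
    (hi₁ : 2 ≤ i) (hi₂ : i ≤ k + 1) (m : ℕ → ℕ)
    (hm : ∀ j, 1 ≤ j → j ≤ i - 1 → 1 ≤ m j) :
    1 < maxRootAbs (Rpoly m (i - 1)) ∧
    ∀ ε : ℝ, 0 < ε → ∃ M : ℕ, 1 ≤ M ∧
      ∀ m' : ℕ → ℕ, (∀ j, 1 ≤ j → j ≤ i - 1 → m' j = m j) →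
        (∀ j, i ≤ j → j ≤ k + 1 → M ≤ m' j) →
        |maxRootAbs (Ppoly m' k) - maxRootAbs (Rpoly m (i - 1))| < ε := by
  set p : ℕ := i - 1 with hpdef
  have hp : 1 ≤ p := by omega
  have hpk : p ≤ k := by omega
  have hm' : ∀ t, 1 ≤ t → t ≤ p → 1 ≤ m t := fun t ht ht' => hm t ht ht'
  refine ⟨KT.one_lt_maxRootAbs_Rpoly m p hp hm', ?_⟩
  intro ε hε
  set lam : ℝ := maxRootAbs (Rpoly m p) with hlamdef
  have hlam1 : 1 < lam := KT.one_lt_maxRootAbs_Rpoly m p hp hm'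
  obtain ⟨M₁, hM₁1, hM₁⟩ := KT.part_a m p k hp hpk hm'
    (r := lam + ε/2) (by linarith) (by linarith)
  obtain ⟨M₂, hM₂1, hM₂⟩ := KT.part_b m p k hp hpk hm' (ε := ε/2) (by linarith)
  refine ⟨max M₁ M₂, le_trans hM₁1 (le_max_left _ _), ?_⟩
  intro m' hag hbig
  have hbig' : ∀ t, p < t → t ≤ k + 1 → max M₁ M₂ ≤ m' t := by
    intro t ht ht'
    exact hbig t (by omega) ht'
  have ha := hM₁ m' hag (fun t ht ht' => le_trans (le_max_left _ _) (hbig' t ht ht'))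
  obtain ⟨z, hzroot, hzabs⟩ := hM₂ m' hag
    (fun t ht ht' => le_trans (le_max_right _ _) (hbig' t ht ht'))
  -- Ppoly m' k ≠ 0
  have hm'pos : ∀ t, 1 ≤ t → t ≤ k → 1 ≤ m' t := by
    intro t ht ht'
    by_cases h : t ≤ p
    · rw [hag t ht h]; exact hm' t ht h
    · exact le_trans (le_trans hM₁1 (le_max_left _ _)) (hbig' t (by omega) (by omega))
  have hmk1 : 1 ≤ m' (k+1) :=
    le_trans (le_trans hM₁1 (le_max_left _ _)) (hbig' (k+1) (by omega) le_rfl)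
  have hPne : Ppoly m' k ≠ 0 :=
    (KT.monic_Ppoly m' k (le_trans hp hpk) hm'pos hmk1).1.ne_zero
  have hlow : lam - ε/2 < maxRootAbs (Ppoly m' k) :=
    lt_of_lt_of_le hzabs (KT.abs_le_maxRootAbs hPne hzroot)
  rw [abs_sub_lt_iff]
  constructor
  · linarith
  · linarith
end

section
/- Fix integers k ≥ 1 and m_1, …, m_{k+1} ≥ 1. The polynomial P = P_{(m_1,…,m_{k+1})} satisfies P_*(t) = (−1)^{k+1} P(t), where P_*(t) = t^{deg P} P(1/t) is the reciprocal polynomial; that is, P is reciprocal when k is odd and anti-reciprocal when k is even. -/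
open Polynomial

lemma reflect_reflect' (N : ℕ) (f : Polynomial ℤ) : reflect N (reflect N f) = f := by
  ext i
  rw [coeff_reflect, coeff_reflect, revAt_invol]

lemma natDegree_neg_one_pow (j : ℕ) : ((-1 : Polynomial ℤ) ^ j).natDegree = 0 := by
  have : ((-1 : Polynomial ℤ) ^ j) = C ((-1) ^ j) := by rw [map_pow, map_neg, map_one]
  rw [this, natDegree_C]

lemma Rpoly_monic (m : ℕ → ℕ) : ∀ k, 1 ≤ k → (∀ j, 1 ≤ j → j ≤ k → 1 ≤ m j) →
    (Rpoly m k).Monic := by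
  intro k
  induction k using Nat.strong_induction_on with
  | _ k ih =>
    match k with
    | 0 => intro h; omega
    | 1 =>
      intro _ hm
      have h1 : 1 ≤ m 1 := hm 1 le_rfl le_rfl
      show ((X : Polynomial ℤ) ^ (m 1 + 1) * (X - 1) - 2 * X).Monic
      monicity!
    | (i + 2) =>
      intro _ hm
      have hR : (Rpoly m (i + 1)).Monic :=
        ih (i + 1) (by omega) (by omega) (fun j h1 h2 => hm j h1 (by omega))
      have hX1 : ((X : Polynomial ℤ) - 1).Monic := by
        simpa using monic_X_sub_C (1 : ℤ)
      have hA : ((X : Polynomial ℤ) ^ (m (i + 2)) * (X - 1) * Rpoly m (i + 1)).Monic :=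
        ((monic_X_pow _).mul hX1).mul hR
      have hdA : ((X : Polynomial ℤ) ^ (m (i + 2)) * (X - 1) * Rpoly m (i + 1)).natDegree
          = m (i + 2) + 1 + (Rpoly m (i + 1)).natDegree := by
        rw [((monic_X_pow _).mul hX1).natDegree_mul hR, (monic_X_pow _).natDegree_mul hX1,
          natDegree_X_pow]
        have : ((X : Polynomial ℤ) - 1).natDegree = 1 := by simpa using natDegree_X_sub_C (1 : ℤ)
        omega
      have hdB : ((-1 : Polynomial ℤ) ^ (i + 2) * (2 * X) * (Rpoly m (i + 1)).reverse).natDegree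
          ≤ 1 + (Rpoly m (i + 1)).natDegree := by
        refine le_trans (natDegree_mul_le) ?_
        have h2 : ((-1 : Polynomial ℤ) ^ (i + 2) * (2 * X)).natDegree ≤ 1 := by
          refine le_trans (natDegree_mul_le) ?_
          rw [natDegree_neg_one_pow]
          simpa using natDegree_mul_le (p := (2 : Polynomial ℤ)) (q := X)
        have h3 := (Rpoly m (i + 1)).reverse_natDegree_le
        omega
      show ((X : Polynomial ℤ) ^ (m (i + 2)) * (X - 1) * Rpoly m (i + 1)
          + (-1 : Polynomial ℤ) ^ (i + 2) * (2 * X) * (Rpoly m (i + 1)).reverse).Monic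
      refine hA.add_of_left (degree_lt_degree ?_)
      have hmi : 1 ≤ m (i + 2) := hm (i + 2) (by omega) le_rfl
      omega

/-- Claim 4.2 of the paper: `P_{(m_1,…,m_{k+1})}` satisfies
`P_* = (-1)^{k+1} P`, where `P_*` is the reciprocal polynomial
`t^(deg P) P(1/t)`. -/
theorem Ppoly_reverse (k : ℕ) (hk : 1 ≤ k) (m : ℕ → ℕ)
    (hm : ∀ j, 1 ≤ j → j ≤ k + 1 → 1 ≤ m j) :
    (Ppoly m k).reverse = (-1 : Polynomial ℤ) ^ (k + 1) * Ppoly m k := by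
  set R := Rpoly m k with hRdef
  have hR : R.Monic := Rpoly_monic m k hk (fun j h1 h2 => hm j h1 (by omega))
  set d := R.natDegree with hd
  set n := m (k + 1) with hn
  have hn1 : 1 ≤ n := hm (k + 1) (by omega) le_rfl
  have hε : ((-1 : Polynomial ℤ) ^ (k + 1)) = C ((-1 : ℤ) ^ (k + 1)) := by
    rw [map_pow, map_neg, map_one]
  -- degree of the second summand is small
  have hB : ((-1 : Polynomial ℤ) ^ (k + 1) * R.reverse).natDegree < n + d := by
    rw [hε]
    have := natDegree_C_mul_le ((-1 : ℤ) ^ (k + 1)) R.reverse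
    have := R.reverse_natDegree_le
    omega
  have hA : ((X : Polynomial ℤ) ^ n * R).Monic := (monic_X_pow _).mul hR
  have hdA : ((X : Polynomial ℤ) ^ n * R).natDegree = n + d := by
    rw [(monic_X_pow _).natDegree_mul hR, natDegree_X_pow]
  -- the degree of P
  have hdP : (Ppoly m k).natDegree = n + d := by
    rw [Ppoly, ← hRdef, ← hn, natDegree_add_eq_left_of_natDegree_lt (by omega), hdA]
  -- key reflect computations
  have key1 : reflect (n + d) ((X : Polynomial ℤ) ^ n * R) = R.reverse := by
    rw [reflect_mul (X ^ n) R (natDegree_X_pow n).le le_rfl, reflect_monomial,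
      revAt_le (le_refl n), Nat.sub_self, pow_zero, one_mul, reverse]
  have key2 : reflect (n + d) R.reverse = (X : Polynomial ℤ) ^ n * R := by
    rw [← key1, reflect_reflect']
  calc (Ppoly m k).reverse
      = reflect (n + d) (X ^ n * R + (-1 : Polynomial ℤ) ^ (k + 1) * R.reverse) := by
        rw [reverse, hdP]; rfl
    _ = R.reverse + (-1 : Polynomial ℤ) ^ (k + 1) * (X ^ n * R) := by
        rw [reflect_add, key1, hε, reflect_C_mul, key2]
    _ = (-1 : Polynomial ℤ) ^ (k + 1) * Ppoly m k := by
        have hsq : ((-1 : Polynomial ℤ)) ^ (k + 1) * ((-1 : Polynomial ℤ)) ^ (k + 1) = 1 := by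
          rw [← pow_add, ← two_mul, pow_mul]; norm_num
        rw [Ppoly, ← hRdef, ← hn]
        linear_combination (-R.reverse) * hsq
end
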